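/- arXiv:2005.12746 — 6 statements merged into one kernel-verified Lean document; each statement's English description precedes it below -/
import Mathlib

section
/- Let A be a nonzero N×N real matrix and let R = rank(A^N). Then for any integers p, q with N ≤ p ≤ q, there exist real numbers α_1, ..., α_R such that A^p = A^q · Σ_{i=1}^{R} α_i A^i. -/
open Polynomial Module

lemma aeval_restrict_apply {K M : Type*} [Field K] [AddCommGroup M] [Module K M]
    (f : M →ₗ[K] M) {p : Submodule K M} (h : ∀ x ∈ p, f x ∈ p) (q : K[X]) (x : p) :
    ((Polynomial.aeval (f.restrict h) q) x : M) = Polynomial.aeval f q (x : M) := by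
  induction q using Polynomial.induction_on' with
  | add a b ha hb => simp [ha, hb]
  | monomial n a =>
      simp only [aeval_monomial, Module.End.mul_apply, LinearMap.smul_apply]
      rw [Module.End.pow_restrict n h]
      simp [LinearMap.restrict_apply]

/-- For a nonzero `N×N` real matrix `A` with `R = rank(A^N)` and integers `N ≤ p ≤ q`,
there exist reals `α_1, …, α_R` with `A^p = A^q · Σ_{i=1}^R α_i A^i`. -/
theorem pow_eq_pow_mul_lin_comb {N : ℕ} (A : Matrix (Fin N) (Fin N) ℝ)
    (hA : A ≠ 0) (p q : ℕ) (hp : N ≤ p) (hpq : p ≤ q) :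
    ∃ α : Fin (A ^ N).rank → ℝ,
      A ^ p = A ^ q * ∑ i : Fin (A ^ N).rank, α i • A ^ ((i : ℕ) + 1) := by
  classical
  set φ : Matrix (Fin N) (Fin N) ℝ ≃ₐ[ℝ] ((Fin N → ℝ) →ₗ[ℝ] Fin N → ℝ) :=
    Matrix.toLinAlgEquiv'
  have hφ : ∀ M : Matrix (Fin N) (Fin N) ℝ, φ M = M.mulVecLin := by
    intro M; ext v; simp [φ, Matrix.toLinAlgEquiv'_apply, Matrix.mulVecLin_apply]
  set f : (Fin N → ℝ) →ₗ[ℝ] Fin N → ℝ := φ A with hfdef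
  set R := (A ^ N).rank with hRdef
  set V : Submodule ℝ (Fin N → ℝ) := LinearMap.range (f ^ N) with hVdef
  have hVR : finrank ℝ V = R := by
    rw [hRdef, Matrix.rank, ← hφ, map_pow]
  -- range of f^p is inside V
  have hrange : ∀ v : Fin N → ℝ, (f ^ p) v ∈ V := by
    intro v
    have : f ^ p = (f ^ N) * (f ^ (p - N)) := by
      rw [← pow_add, Nat.add_sub_cancel' hp]
    rw [this]
    exact ⟨(f ^ (p - N)) v, rfl⟩
  by_cases hR0 : R = 0
  · refine ⟨fun _ => 0, ?_⟩
    have hV : V = ⊥ := Submodule.finrank_eq_zero.mp (by rw [hVR]; exact hR0)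
    have hfp : f ^ p = 0 := by
      refine LinearMap.ext fun v => ?_
      have := hrange v
      rw [hV] at this
      simpa using this
    have : A ^ p = 0 := by
      apply φ.injective
      rw [map_pow, map_zero]
      exact hfp
    rw [this]
    rw [Finset.sum_eq_zero (fun i _ => by simp), mul_zero]
  -- main case
  have hfV : ∀ x ∈ V, f x ∈ V := by
    rintro _ ⟨y, rfl⟩
    exact ⟨f y, by rw [← Module.End.mul_apply, ← pow_succ, pow_succ', Module.End.mul_apply]⟩
  set B := f.restrict hfV with hBdef
  have hker : LinearMap.ker (f ^ (N + 1)) = LinearMap.ker (f ^ N) := by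
    have hfin : finrank ℝ (Fin N → ℝ) = N := by simp
    have h1 := Module.End.ker_pow_eq_ker_pow_finrank_of_le (f := f) (m := N + 1)
      (by rw [hfin]; omega)
    have h2 := Module.End.ker_pow_eq_ker_pow_finrank_of_le (f := f) (m := N) (by rw [hfin])
    rw [h1, h2]
  have hBinj : Function.Injective B := by
    rw [← LinearMap.ker_eq_bot]
    rw [LinearMap.ker_eq_bot']
    rintro ⟨x, y, rfl⟩ hx
    have hfx : f ((f ^ N) y) = 0 := congrArg Subtype.val hx
    have : (f ^ (N + 1)) y = 0 := by
      rw [pow_succ', Module.End.mul_apply]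
      exact hfx
    have : y ∈ LinearMap.ker (f ^ N) := hker ▸ this
    exact Subtype.ext (by simpa using this)
  have hBunit : IsUnit B := by
    rw [LinearMap.isUnit_iff_ker_eq_bot, LinearMap.ker_eq_bot]
    exact hBinj
  have hdet : LinearMap.det B ≠ 0 := isUnit_iff_ne_zero.mp (B.isUnit_det hBunit)
  set χ := LinearMap.charpoly B with hχdef
  have hχmonic : χ.Monic := B.charpoly_monic
  have hχdeg : χ.natDegree = R := by rw [hχdef, B.charpoly_natDegree, hVR]
  have hχaeval : Polynomial.aeval B χ = 0 := B.aeval_self_charpoly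
  have hc0 : χ.coeff 0 ≠ 0 := by
    intro h
    apply hdet
    rw [LinearMap.det_eq_sign_charpoly_coeff, h, mul_zero]
  set c := q - p with hcdef
  set E : ℝ[X] := C (-(χ.coeff 0)⁻¹) * χ.divX with hEdef
  have hXE : Polynomial.aeval B (X * E) = 1 := by
    have hCC : (C (χ.coeff 0)⁻¹ * C (χ.coeff 0) : ℝ[X]) = 1 := by
      rw [← C_mul, inv_mul_cancel₀ hc0, C_1]
    have hpoly : X * E = 1 - C (χ.coeff 0)⁻¹ * χ := by
      have hχ' := X_mul_divX_add χ
      rw [hEdef, map_neg]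
      linear_combination hCC + (-(C (χ.coeff 0)⁻¹)) * hχ'
    rw [hpoly, map_sub, map_mul, hχaeval, mul_zero, map_one]
    exact sub_zero (1 : ↥V →ₗ[ℝ] ↥V)
  set g : ℝ[X] := (E ^ (c + 1)) %ₘ χ with hgdef
  have hgaeval : Polynomial.aeval B (X ^ (c + 1) * g) = 1 := by
    have h1 : Polynomial.aeval B (E ^ (c + 1)) = Polynomial.aeval B g := by
      conv_lhs => rw [← modByMonic_add_div (E ^ (c + 1)) χ]
      rw [map_add, map_mul, hχaeval, zero_mul, add_zero, hgdef]
    rw [map_mul, ← h1, ← map_mul, ← mul_pow, map_pow, hXE, one_pow]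
  have hgdeg : g.natDegree < R := by
    by_cases hg0 : g = 0
    · rw [hg0, natDegree_zero]; omega
    · rw [← hχdeg]
      exact natDegree_lt_natDegree hg0 (degree_modByMonic_lt _ hχmonic)
  -- key: aeval f (X^(c+1) * g) is identity on V
  have hkey : ∀ x ∈ V, Polynomial.aeval f (X ^ (c + 1) * g) x = x := by
    intro x hx
    have := aeval_restrict_apply f hfV (X ^ (c + 1) * g) ⟨x, hx⟩
    rw [← hBdef, hgaeval] at this
    simpa using this.symm
  -- endomorphism-level identity
  have hmain : f ^ p = f ^ q * (f * Polynomial.aeval f g) := by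
    have hmul : (X : ℝ[X]) ^ q * (X * g) = X ^ (c + 1) * g * X ^ p := by
      rw [show q = c + p by omega]; ring
    have hrw : f ^ q * (f * Polynomial.aeval f g)
        = Polynomial.aeval f (X ^ (c + 1) * g) * f ^ p := by
      calc f ^ q * (f * Polynomial.aeval f g)
          = Polynomial.aeval f (X ^ q * (X * g)) := by
            rw [map_mul, map_mul, aeval_X_pow, aeval_X]
        _ = Polynomial.aeval f (X ^ (c + 1) * g * X ^ p) := by rw [hmul]
        _ = Polynomial.aeval f (X ^ (c + 1) * g) * f ^ p := by rw [map_mul, aeval_X_pow]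
    refine LinearMap.ext fun v => ?_
    rw [hrw, Module.End.mul_apply]
    exact (hkey _ (hrange v)).symm
  -- back to matrices
  refine ⟨fun i => g.coeff i, ?_⟩
  apply φ.injective
  rw [map_pow, map_mul, map_pow, map_sum]
  have hfg : Polynomial.aeval f g = ∑ i ∈ Finset.range R, g.coeff i • f ^ i :=
    aeval_eq_sum_range' hgdeg f
  have hfsum : f * Polynomial.aeval f g = ∑ i : Fin R, g.coeff i • f ^ ((i : ℕ) + 1) := by
    calc f * Polynomial.aeval f g
        = ∑ i ∈ Finset.range R, g.coeff i • f ^ (i + 1) := by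
          rw [hfg, Finset.mul_sum]
          exact Finset.sum_congr rfl fun i _ => by rw [mul_smul_comm, ← pow_succ']
      _ = ∑ i : Fin R, g.coeff i • f ^ ((i : ℕ) + 1) :=
          (Fin.sum_univ_eq_sum_range (fun i => g.coeff i • f ^ (i + 1)) R).symm
  calc f ^ p = f ^ q * (f * Polynomial.aeval f g) := hmain
    _ = f ^ q * ∑ i : Fin R, g.coeff i • f ^ ((i : ℕ) + 1) := by rw [hfsum]
    _ = _ := by
        congr 1
        apply Finset.sum_congr rfl
        intro i _
        rw [map_smul, map_pow]
end

section
/- Kalman rank test for output controllability: the discrete-time linear system x_k = A x_{k−1} + B u_k, y_k = C x_k is output controllable (i.e., for every initial state x_0 and every target y_f ∈ ℝ^n there exist a finite K and inputs u_1,…,u_K driving y_K = y_f) if and only if rank(C·W) = n, where W = [A^{N−1}B, …, B]. -/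
open Matrix

/-- The controllability matrix `W = [A^{N−1}B, …, B]` of the pair `(A, B)`. -/
def ctrbMat {N m : ℕ} (A : Matrix (Fin N) (Fin N) ℝ) (B : Matrix (Fin N) (Fin m) ℝ) :
    Matrix (Fin N) (Fin N × Fin m) ℝ :=
  fun i p => (A ^ (N - 1 - (p.1 : ℕ)) * B) i p.2

/-- Output controllability of the system `x_k = A x_{k−1} + B u_k`, `y_k = C x_k`:
every target output is reachable from every initial state in finite time. -/
def OutputControllable {N m n : ℕ} (A : Matrix (Fin N) (Fin N) ℝ)
    (B : Matrix (Fin N) (Fin m) ℝ) (C : Matrix (Fin n) (Fin N) ℝ) : Prop :=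
  ∀ x0 : Fin N → ℝ, ∀ yf : Fin n → ℝ, ∃ K : ℕ, 0 < K ∧ ∃ u : Fin K → Fin m → ℝ,
    C.mulVec ((∑ k : Fin K, (A ^ (K - 1 - (k : ℕ))).mulVec (B.mulVec (u k)))
      + (A ^ K).mulVec x0) = yf

lemma pow_card_mem_span {N : ℕ} (A : Matrix (Fin N) (Fin N) ℝ) (hN : 0 < N) :
    A ^ N ∈ Submodule.span ℝ (Set.range fun i : Fin N => A ^ (i : ℕ)) := by
  have hmono := A.charpoly_monic
  have hdeg : A.charpoly.natDegree = N := by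
    simpa using A.charpoly_natDegree_eq_dim
  have h0 := A.aeval_self_charpoly
  rw [Polynomial.aeval_eq_sum_range, hdeg, Finset.sum_range_succ] at h0
  have hc : A.charpoly.coeff N = 1 := by
    have := hmono.leadingCoeff
    rwa [Polynomial.leadingCoeff, hdeg] at this
  rw [hc, one_smul] at h0
  have : A ^ N = -∑ i ∈ Finset.range N, A.charpoly.coeff i • A ^ i := by
    linear_combination (norm := (push_cast; abel)) h0
  rw [this]
  refine Submodule.neg_mem _ (Submodule.sum_mem _ fun i hi => ?_)
  exact Submodule.smul_mem _ _
    (Submodule.subset_span ⟨⟨i, Finset.mem_range.mp hi⟩, rfl⟩)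

lemma pow_mem_span {N : ℕ} (A : Matrix (Fin N) (Fin N) ℝ) (hN : 0 < N) (j : ℕ) :
    A ^ j ∈ Submodule.span ℝ (Set.range fun i : Fin N => A ^ (i : ℕ)) := by
  set P := Submodule.span ℝ (Set.range fun i : Fin N => A ^ (i : ℕ)) with hP
  induction j with
  | zero => exact Submodule.subset_span ⟨⟨0, hN⟩, rfl⟩
  | succ j ih =>
    have key : ∀ X ∈ P, A * X ∈ P := by
      intro X hX
      induction hX using Submodule.span_induction with
      | mem x hx =>
        obtain ⟨i, rfl⟩ := hx
        show A * A ^ (i : ℕ) ∈ P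
        rw [← pow_succ']
        rcases lt_or_eq_of_le (Nat.succ_le_of_lt i.2) with h | h
        · exact Submodule.subset_span ⟨⟨(i : ℕ) + 1, h⟩, rfl⟩
        · rw [show (i : ℕ) + 1 = N from h]
          exact pow_card_mem_span A hN
      | zero => simpa using Submodule.zero_mem P
      | add x y _ _ hx hy => rw [mul_add]; exact Submodule.add_mem _ hx hy
      | smul c x _ hx => rw [mul_smul_comm]; exact Submodule.smul_mem _ _ hx
    rw [pow_succ']
    exact key _ ih

lemma C_ctrb_mulVec {N m n : ℕ} (A : Matrix (Fin N) (Fin N) ℝ) (B : Matrix (Fin N) (Fin m) ℝ)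
    (C : Matrix (Fin n) (Fin N) ℝ) (v : Fin N × Fin m → ℝ) :
    (C * ctrbMat A B).mulVec v
      = ∑ k : Fin N,
          C.mulVec ((A ^ (N - 1 - (k : ℕ))).mulVec (B.mulVec (fun j => v (k, j)))) := by
  have h1 : (ctrbMat A B).mulVec v
      = ∑ k : Fin N, (A ^ (N - 1 - (k : ℕ)) * B).mulVec (fun j => v (k, j)) := by
    ext l
    simp [Matrix.mulVec, dotProduct, Fintype.sum_prod_type, ctrbMat]
  calc (C * ctrbMat A B).mulVec v = C.mulVec ((ctrbMat A B).mulVec v) := by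
        rw [Matrix.mulVec_mulVec]
    _ = ∑ k : Fin N, C.mulVec ((A ^ (N - 1 - (k : ℕ)) * B).mulVec (fun j => v (k, j))) := by
        rw [h1, ← C.mulVecLin_apply, map_sum]
        simp
    _ = _ := by simp only [← Matrix.mulVec_mulVec]

/-- Kalman rank test for output controllability: the system is output controllable
iff `rank(C·W) = n`. -/
theorem output_controllable_iff_rank {N m n : ℕ} (A : Matrix (Fin N) (Fin N) ℝ)
    (B : Matrix (Fin N) (Fin m) ℝ) (C : Matrix (Fin n) (Fin N) ℝ) :
    OutputControllable A B C ↔ (C * ctrbMat A B).rank = n := by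
  rcases Nat.eq_zero_or_pos N with hN | hN
  · subst hN
    have hrank : (C * ctrbMat A B).rank = 0 := by
      have := (C * ctrbMat A B).rank_le_card_width
      simpa using this
    constructor
    · intro h
      rw [hrank]
      by_contra hn
      have hn' : 0 < n := Nat.pos_of_ne_zero fun h0 => hn h0.symm
      obtain ⟨K, hK, u, hu⟩ := h 0 1
      have h2 := congrFun hu ⟨0, hn'⟩
      simp [Matrix.mulVec, dotProduct] at h2
    · intro h x0 yf
      have hn : n = 0 := by omega
      refine ⟨1, one_pos, fun _ => 0, ?_⟩
      funext i
      exact absurd i.2 (by omega)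
  · -- N > 0
    set R := LinearMap.range (C * ctrbMat A B).mulVecLin with hR
    have key : ∀ M ∈ Submodule.span ℝ (Set.range fun i : Fin N => A ^ (i : ℕ)),
        ∀ w : Fin m → ℝ, C.mulVec (M.mulVec (B.mulVec w)) ∈ R := by
      intro M hM
      induction hM using Submodule.span_induction with
      | mem M hM =>
        obtain ⟨i, rfl⟩ := hM
        intro w
        have hiN : (i : ℕ) < N := i.2
        refine ⟨fun p => if p.1 = (⟨N - 1 - (i : ℕ), by omega⟩ : Fin N) then w p.2 else 0, ?_⟩
        rw [Matrix.mulVecLin_apply, C_ctrb_mulVec]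
        rw [Fintype.sum_eq_single (⟨N - 1 - (i : ℕ), by omega⟩ : Fin N)]
        · have hexp : N - 1 - ((⟨N - 1 - (i : ℕ), by omega⟩ : Fin N) : ℕ) = (i : ℕ) := by
            simp only [Fin.val_mk]
            omega
          rw [hexp]
          simp
        · intro k hk
          simp only [if_neg hk]
          have hz : (fun j : Fin m => (0 : ℝ)) = (0 : Fin m → ℝ) := rfl
          rw [hz, Matrix.mulVec_zero, Matrix.mulVec_zero, Matrix.mulVec_zero]
      | zero => intro w; simp [hR]
      | add x y _ _ ihx ihy =>
        intro w
        rw [Matrix.add_mulVec, Matrix.mulVec_add]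
        exact R.add_mem (ihx w) (ihy w)
      | smul c M _ ihM =>
        intro w
        rw [Matrix.smul_mulVec, Matrix.mulVec_smul]
        exact R.smul_mem c (ihM w)
    constructor
    · intro h
      have htop : R = ⊤ := by
        rw [Submodule.eq_top_iff']
        intro yf
        obtain ⟨K, hK, u, hu⟩ := h 0 yf
        rw [Matrix.mulVec_zero, add_zero] at hu
        rw [← hu, ← C.mulVecLin_apply, map_sum]
        refine Submodule.sum_mem _ fun k _ => ?_
        simpa using key _ (pow_mem_span A hN _) (u k)
      show Module.finrank ℝ R = n
      rw [htop]
      simp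
    · intro h
      have htop : R = ⊤ := by
        apply Submodule.eq_top_of_finrank_eq
        rw [show Module.finrank ℝ R = (C * ctrbMat A B).rank from rfl, h]
        simp
      intro x0 yf
      refine ⟨N, hN, ?_⟩
      have hmem : yf - C.mulVec ((A ^ N).mulVec x0) ∈ R := htop ▸ Submodule.mem_top
      obtain ⟨v, hv⟩ := hmem
      refine ⟨fun k j => v (k, j), ?_⟩
      have h2 : C.mulVec (∑ k : Fin N,
            (A ^ (N - 1 - (k : ℕ))).mulVec (B.mulVec (fun j => v (k, j))))
          = yf - C.mulVec ((A ^ N).mulVec x0) := by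
        rw [← C.mulVecLin_apply, map_sum]
        simp only [Matrix.mulVecLin_apply]
        rw [← C_ctrb_mulVec, ← Matrix.mulVecLin_apply, hv]
      rw [Matrix.mulVec_add]
      simp only []
      rw [h2]
      abel
end

section
/- Necessity of the sparsity bound: if the system (A,B,C) is output s-sparse controllable, then rank(C·W) = n and for every 0 ≤ i ≤ N−1, (i+1)·s ≥ Σ_{j=0}^{i} R_j = n − rank(C·A^{i+1}·W), where R_j = rank(C A^j W) − rank(C A^{j+1} W). -/
open Matrix

/-- Output `s`-sparse controllability: every target output is reachable from every
initial state in finite time using inputs each with at most `s` nonzero entries. -/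
def OutputSparseControllable {N m n : ℕ} (A : Matrix (Fin N) (Fin N) ℝ)
    (B : Matrix (Fin N) (Fin m) ℝ) (C : Matrix (Fin n) (Fin N) ℝ) (s : ℕ) : Prop :=
  ∀ x0 : Fin N → ℝ, ∀ yf : Fin n → ℝ, ∃ K : ℕ, 0 < K ∧ ∃ u : Fin K → Fin m → ℝ,
    (∀ k, (Function.support (u k)).ncard ≤ s) ∧
    C.mulVec ((∑ k : Fin K, (A ^ (K - 1 - (k : ℕ))).mulVec (B.mulVec (u k)))
      + (A ^ K).mulVec x0) = yf


open Polynomial in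
lemma pow_card_eq_sum {N : ℕ} (hN : 0 < N) (A : Matrix (Fin N) (Fin N) ℝ) :
    ∃ c : ℕ → ℝ, A ^ N = ∑ j ∈ Finset.range N, c j • A ^ j := by
  have hmon := A.charpoly_monic
  have hdeg : A.charpoly.natDegree = N := by
    simpa using A.charpoly_natDegree_eq_dim
  have h0 := A.aeval_self_charpoly
  rw [aeval_eq_sum_range' (n := N + 1) (by omega) A, Finset.sum_range_succ] at h0
  have hlead : A.charpoly.coeff N = 1 := by
    have := hmon.leadingCoeff
    rwa [Polynomial.leadingCoeff, hdeg] at this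
  rw [hlead, one_smul] at h0
  refine ⟨fun j => -A.charpoly.coeff j, ?_⟩
  have : A ^ N = -∑ j ∈ Finset.range N, A.charpoly.coeff j • A ^ j := by
    rw [eq_neg_iff_add_eq_zero, add_comm]; exact h0
  rw [this, ← Finset.sum_neg_distrib]
  simp [neg_smul]

lemma pow_col_mem {N m : ℕ} (hN : 0 < N) (A : Matrix (Fin N) (Fin N) ℝ)
    (B : Matrix (Fin N) (Fin m) ℝ) (t : ℕ) (q : Fin m) :
    (fun i => (A ^ t * B) i q) ∈ Submodule.span ℝ (Set.range (ctrbMat A B)ᵀ) := by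
  induction t using Nat.strong_induction_on with
  | _ t ih =>
    by_cases ht : t < N
    · apply Submodule.subset_span
      refine ⟨(⟨N - 1 - t, by omega⟩, q), ?_⟩
      have : N - 1 - (N - 1 - t) = t := by omega
      ext i
      simp [ctrbMat, transpose_apply, this]
    · push_neg at ht
      obtain ⟨c, hc⟩ := pow_card_eq_sum hN A
      have hAt : A ^ t * B = ∑ j ∈ Finset.range N, c j • (A ^ (t - N + j) * B) := by
        have h1 : A ^ t = A ^ (t - N) * A ^ N := by rw [← pow_add]; congr 1; omega
        rw [h1, hc, Matrix.mul_sum, Matrix.sum_mul]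
        refine Finset.sum_congr rfl fun j hj => ?_
        rw [mul_smul_comm, Matrix.smul_mul, ← pow_add]
      have hcol : (fun i => (A ^ t * B) i q)
          = ∑ j ∈ Finset.range N, c j • (fun i => (A ^ (t - N + j) * B) i q) := by
        ext i
        rw [hAt]
        simp [Matrix.sum_apply, Matrix.smul_apply, smul_eq_mul]
      rw [hcol]
      exact Submodule.sum_mem _ fun j hj => Submodule.smul_mem _ _
        (ih _ (by simp at hj; omega))

lemma range_pow_mul_le {N m : ℕ} (hN : 0 < N) (A : Matrix (Fin N) (Fin N) ℝ)
    (B : Matrix (Fin N) (Fin m) ℝ) (t : ℕ) :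
    LinearMap.range (A ^ t * B).mulVecLin ≤ LinearMap.range (ctrbMat A B).mulVecLin := by
  rw [Matrix.range_mulVecLin, Matrix.range_mulVecLin]
  refine Submodule.span_le.2 ?_
  rintro x ⟨q, rfl⟩
  exact pow_col_mem hN A B t q

lemma mapA_le {N m : ℕ} (hN : 0 < N) (A : Matrix (Fin N) (Fin N) ℝ)
    (B : Matrix (Fin N) (Fin m) ℝ) :
    Submodule.map A.mulVecLin (LinearMap.range (ctrbMat A B).mulVecLin)
      ≤ LinearMap.range (ctrbMat A B).mulVecLin := by
  conv_lhs => rw [Matrix.range_mulVecLin]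
  rw [Submodule.map_span, Matrix.range_mulVecLin]
  refine Submodule.span_le.2 ?_
  rintro x ⟨y, ⟨⟨p, q⟩, rfl⟩, rfl⟩
  have hy : A.mulVecLin ((ctrbMat A B)ᵀ (p, q)) = fun i => (A ^ (N - 1 - (p:ℕ) + 1) * B) i q := by
    ext i
    simp only [Matrix.mulVecLin_apply, Matrix.mulVec, Matrix.transpose_apply, ctrbMat,
      dotProduct, pow_succ']
    rw [Matrix.mul_assoc, Matrix.mul_apply]
  rw [show (ctrbMat A B).col (p, q) = (ctrbMat A B)ᵀ (p, q) from rfl, hy]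
  exact pow_col_mem hN A B _ q

lemma range_mul_eq_map {a b c : ℕ} (M : Matrix (Fin a) (Fin b) ℝ) (P : Matrix (Fin b) (Fin c) ℝ) :
    LinearMap.range (M * P).mulVecLin = Submodule.map M.mulVecLin (LinearMap.range P.mulVecLin) := by
  rw [Matrix.mulVecLin_mul, LinearMap.range_comp]

lemma range_mul_eq_map' {a b c c' : ℕ} (M : Matrix (Fin a) (Fin b) ℝ)
    (P : Matrix (Fin b) (Fin c × Fin c') ℝ) :
    LinearMap.range (M * P).mulVecLin = Submodule.map M.mulVecLin (LinearMap.range P.mulVecLin) := by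
  rw [Matrix.mulVecLin_mul, LinearMap.range_comp]

lemma rank_antitone_step {N m n : ℕ} (hN : 0 < N) (A : Matrix (Fin N) (Fin N) ℝ)
    (B : Matrix (Fin N) (Fin m) ℝ) (C : Matrix (Fin n) (Fin N) ℝ) (j : ℕ) :
    (C * A ^ (j + 1) * ctrbMat A B).rank ≤ (C * A ^ j * ctrbMat A B).rank := by
  have hfac : C * A ^ (j + 1) * ctrbMat A B = (C * A ^ j) * (A * ctrbMat A B) := by
    rw [pow_succ, ← Matrix.mul_assoc, ← Matrix.mul_assoc]
  have hle : LinearMap.range (C * A ^ (j+1) * ctrbMat A B).mulVecLin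
      ≤ LinearMap.range (C * A ^ j * ctrbMat A B).mulVecLin := by
    have h2 : LinearMap.range (A * ctrbMat A B).mulVecLin
        ≤ LinearMap.range (ctrbMat A B).mulVecLin := by
      rw [range_mul_eq_map']
      exact mapA_le hN A B
    calc LinearMap.range (C * A ^ (j+1) * ctrbMat A B).mulVecLin
        = Submodule.map (C * A ^ j).mulVecLin (LinearMap.range (A * ctrbMat A B).mulVecLin) := by
          rw [hfac]; exact range_mul_eq_map' _ _
      _ ≤ Submodule.map (C * A ^ j).mulVecLin (LinearMap.range (ctrbMat A B).mulVecLin) :=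
          Submodule.map_mono h2
      _ = LinearMap.range (C * A ^ j * ctrbMat A B).mulVecLin := (range_mul_eq_map' _ _).symm
  exact Submodule.finrank_mono hle

lemma rank_CW_eq {N m n : ℕ} (hN : 0 < N) (A : Matrix (Fin N) (Fin N) ℝ)
    (B : Matrix (Fin N) (Fin m) ℝ) (C : Matrix (Fin n) (Fin N) ℝ) {s : ℕ}
    (h : OutputSparseControllable A B C s) : (C * ctrbMat A B).rank = n := by
  have htop : LinearMap.range (C * ctrbMat A B).mulVecLin = ⊤ := by
    rw [Submodule.eq_top_iff']
    intro yf
    obtain ⟨K, hK, u, hsupp, hy⟩ := h 0 yf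
    rw [Matrix.mulVec_zero, add_zero] at hy
    rw [range_mul_eq_map']
    refine ⟨_, ?_, hy⟩
    refine Submodule.sum_mem _ fun k _ => ?_
    rw [Matrix.mulVec_mulVec]
    exact range_pow_mul_le hN A B _ ⟨u k, rfl⟩
  show Module.finrank ℝ (LinearMap.range (C * ctrbMat A B).mulVecLin) = n
  rw [htop, finrank_top, Module.finrank_fin_fun]

lemma sparse_bound {N m n : ℕ} (A : Matrix (Fin N) (Fin N) ℝ) (B : Matrix (Fin N) (Fin m) ℝ)
    (C : Matrix (Fin n) (Fin N) ℝ) {s : ℕ} (h : OutputSparseControllable A B C s)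
    (i : ℕ) (hi : i < N) :
    n ≤ (C * A ^ (i + 1) * ctrbMat A B).rank + (i + 1) * s := by
  have hN : 0 < N := by omega
  set W := ctrbMat A B with hW
  set V : Submodule ℝ (Fin n → ℝ) := LinearMap.range (C * A ^ (i + 1) * W).mulVecLin with hV
  set col : ℕ → Fin m → (Fin n → ℝ) := fun e j => fun a => (C * A ^ e * B) a j with hcol
  let ι := {σ : Fin (i + 1) → Finset (Fin m) // ∀ k, (σ k).card ≤ s}
  set tset : ι → Finset (Fin (i + 1) × Fin m) := fun σ =>
    Finset.univ.biUnion fun e => (σ.1 e).image fun j => (e, j) with htset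
  set p : ι → Submodule ℝ (Fin n → ℝ) := fun σ =>
    V ⊔ Submodule.span ℝ
      ((((tset σ).image fun pr => col (pr.1 : ℕ) pr.2) : Finset (Fin n → ℝ)) : Set (Fin n → ℝ))
    with hp
  have hcover : ∀ yf : Fin n → ℝ, ∃ σ : ι, yf ∈ p σ := by
    intro yf
    obtain ⟨K, hK, u, hsupp, hy⟩ := h 0 yf
    rw [Matrix.mulVec_zero, add_zero] at hy
    refine ⟨⟨fun e => if he : (e : ℕ) < K then
        (Set.toFinite (Function.support (u ⟨K - 1 - (e : ℕ), by omega⟩))).toFinset else ∅, ?_⟩, ?_⟩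
    · intro e
      dsimp only
      split
      · rw [← Set.ncard_eq_toFinset_card]
        exact hsupp _
      · simp
    have hy2 : yf = ∑ k : Fin K, (C * A ^ (K - 1 - (k : ℕ)) * B).mulVec (u k) := by
      rw [← hy, ← Matrix.mulVecLin_apply, map_sum]
      refine Finset.sum_congr rfl fun k _ => ?_
      rw [Matrix.mulVecLin_apply, Matrix.mulVec_mulVec, Matrix.mulVec_mulVec]
    rw [hy2]
    refine Submodule.sum_mem _ fun k _ => ?_
    by_cases hke : (K - 1 - (k : ℕ)) ≤ i
    · have hkK : (k : ℕ) < K := k.2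
      have hkeq : K - 1 - (K - 1 - (k : ℕ)) = (k : ℕ) := by omega
      have heK : K - 1 - (k : ℕ) < K := by omega
      have hterm : (C * A ^ (K - 1 - (k : ℕ)) * B).mulVec (u k)
          = ∑ j : Fin m, u k j • col (K - 1 - (k : ℕ)) j := by
        ext a
        simp only [Matrix.mulVec, dotProduct, Finset.sum_apply, Pi.smul_apply, smul_eq_mul, hcol]
        exact Finset.sum_congr rfl fun j _ => mul_comm _ _
      rw [hterm]
      refine Submodule.sum_mem _ fun j _ => ?_
      by_cases hj : u k j = 0
      · rw [hj, zero_smul]; exact Submodule.zero_mem _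
      · refine Submodule.smul_mem _ _ (Submodule.mem_sup_right (Submodule.subset_span ?_))
        simp only [Finset.coe_image, Set.mem_image, Finset.mem_coe]
        refine ⟨(⟨K - 1 - (k : ℕ), by omega⟩, j), ?_, rfl⟩
        rw [htset]
        simp only [Finset.mem_biUnion, Finset.mem_univ, Finset.mem_image, true_and]
        refine ⟨⟨K - 1 - (k : ℕ), by omega⟩, j, ?_, rfl⟩
        dsimp only
        rw [dif_pos heK]
        rw [Set.Finite.mem_toFinset, Function.mem_support]
        have : (⟨K - 1 - (K - 1 - (k : ℕ)), by omega⟩ : Fin K) = k := by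
          ext; exact hkeq
        rw [this]
        exact hj
    · push_neg at hke
      have hfac : C * A ^ (K - 1 - (k : ℕ)) * B
          = (C * A ^ (i + 1)) * (A ^ (K - 1 - (k : ℕ) - (i + 1)) * B) := by
        have h3 : A ^ (K - 1 - (k : ℕ)) = A ^ (i + 1) * A ^ (K - 1 - (k : ℕ) - (i + 1)) := by
          rw [← pow_add]
          congr 1
          omega
        simp only [Matrix.mul_assoc]
        rw [h3, Matrix.mul_assoc]
      refine Submodule.mem_sup_left ?_
      rw [hV, range_mul_eq_map' (C * A ^ (i + 1)) W]
      rw [hfac, ← Matrix.mulVec_mulVec]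
      exact Submodule.mem_map_of_mem
        (range_pow_mul_le hN A B (K - 1 - (k : ℕ) - (i + 1)) ⟨u k, rfl⟩)
  have hunion : ⋃ σ : ι, (p σ : Set (Fin n → ℝ)) = Set.univ := by
    rw [Set.eq_univ_iff_forall]
    intro y
    rcases hcover y with ⟨σ, hσ⟩
    exact Set.mem_iUnion.2 ⟨σ, hσ⟩
  obtain ⟨σ, hσtop⟩ := Subspace.exists_eq_top_of_iUnion_eq_univ hunion
  have hspan : Module.finrank ℝ
      (Submodule.span ℝ
        ((((tset σ).image fun pr => col (pr.1 : ℕ) pr.2) : Finset (Fin n → ℝ)) : Set (Fin n → ℝ)))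
      ≤ (i + 1) * s := by
    refine le_trans (finrank_span_finset_le_card _) ?_
    refine le_trans Finset.card_image_le ?_
    refine le_trans Finset.card_biUnion_le ?_
    calc ∑ e : Fin (i + 1), ((σ.1 e).image fun j => (e, j)).card
        ≤ ∑ _e : Fin (i + 1), s :=
          Finset.sum_le_sum fun e _ => le_trans Finset.card_image_le (σ.2 e)
      _ = (i + 1) * s := by simp [Finset.sum_const, Finset.card_univ]
  have h1 : Module.finrank ℝ (p σ) ≤ (C * A ^ (i + 1) * W).rank + (i + 1) * s := by
    refine le_trans (Submodule.finrank_add_le_finrank_add_finrank _ _) ?_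
    exact Nat.add_le_add le_rfl hspan
  have h2 : n = Module.finrank ℝ (p σ) := by
    rw [hσtop, finrank_top, Module.finrank_fin_fun]
  omega

/-- Necessity: if the system is output `s`-sparse controllable, then `rank(C·W) = n`
and for every `0 ≤ i ≤ N−1`, `(i+1)·s ≥ Σ_{j=0}^i R_j = n − rank(C·A^{i+1}·W)`. -/
theorem output_sparse_controllable_necessary {N m n : ℕ}
    (A : Matrix (Fin N) (Fin N) ℝ) (B : Matrix (Fin N) (Fin m) ℝ)
    (C : Matrix (Fin n) (Fin N) ℝ) (s : ℕ) (hs : 0 < s) (hsm : s ≤ m)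
    (h : OutputSparseControllable A B C s) :
    (C * ctrbMat A B).rank = n ∧
      ∀ i < N,
        (∑ j ∈ Finset.range (i + 1),
            ((C * A ^ j * ctrbMat A B).rank - (C * A ^ (j + 1) * ctrbMat A B).rank))
          = n - (C * A ^ (i + 1) * ctrbMat A B).rank ∧
        n - (C * A ^ (i + 1) * ctrbMat A B).rank ≤ (i + 1) * s := by
  rcases Nat.eq_zero_or_pos N with hN0 | hN
  · subst hN0
    have hn : n = 0 := by
      by_contra hn
      obtain ⟨K, hK, u, hsupp, hy⟩ := h 0 (fun _ => 1)
      have h1 : (1 : ℝ) = 0 := by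
        have h2 := congrFun hy ⟨0, Nat.pos_of_ne_zero hn⟩
        rw [← h2]
        simp [Matrix.mulVec, dotProduct]
      norm_num at h1
    constructor
    · have hle := Matrix.rank_le_card_height (C * ctrbMat A B)
      simp only [Fintype.card_fin] at hle
      omega
    · intro i hi
      omega
  · refine ⟨rank_CW_eq hN A B C h, ?_⟩
    intro i hi
    have hr0 : (C * A ^ 0 * ctrbMat A B).rank = n := by
      rw [pow_zero, Matrix.mul_one]
      exact rank_CW_eq hN A B C h
    have key : ∀ i' : ℕ,
        (∑ j ∈ Finset.range (i' + 1),
            ((C * A ^ j * ctrbMat A B).rank - (C * A ^ (j + 1) * ctrbMat A B).rank))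
          = (C * A ^ 0 * ctrbMat A B).rank - (C * A ^ (i' + 1) * ctrbMat A B).rank ∧
        (C * A ^ (i' + 1) * ctrbMat A B).rank ≤ (C * A ^ 0 * ctrbMat A B).rank := by
      intro i'
      induction i' with
      | zero => exact ⟨by rw [Finset.sum_range_one], rank_antitone_step hN A B C 0⟩
      | succ i' ih =>
        have hstep := rank_antitone_step hN A B C (i' + 1)
        obtain ⟨ih1, ih2⟩ := ih
        rw [Finset.sum_range_succ, ih1]
        omega
    obtain ⟨hsum, _⟩ := key i
    rw [hr0] at hsum
    refine ⟨hsum, ?_⟩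
    have hb := sparse_bound A B C h i hi
    omega
end

section
/- Sufficiency of the sparsity bound: if rank(C·W) = n and s ≥ min{m, max_{0 ≤ i ≤ N−1} R_i} with R_i = rank(C A^i W) − rank(C A^{i+1} W), then the system (A,B,C) is output s-sparse controllable. -/
open Matrix

open Submodule Module

namespace OSCaux
variable {N m n : ℕ} (A : Matrix (Fin N) (Fin N) ℝ) (B : Matrix (Fin N) (Fin m) ℝ)
  (C : Matrix (Fin n) (Fin N) ℝ)

/-- atom with exponent f and channel j : the j-th column of C A^f B -/
noncomputable def atom (f : ℕ) (j : Fin m) : Fin n → ℝ := (C * A ^ f * B).mulVec (Pi.single j 1)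

noncomputable def atomN (f : ℕ) (j : Fin m) : Fin N → ℝ := (A ^ f * B).mulVec (Pi.single j 1)

noncomputable def Usub (e : ℕ) : Submodule ℝ (Fin N → ℝ) :=
  Submodule.span ℝ {v | ∃ f, e ≤ f ∧ ∃ j, v = atomN A B f j}

noncomputable def Vsub (e : ℕ) : Submodule ℝ (Fin n → ℝ) :=
  Submodule.span ℝ {v | ∃ f, e ≤ f ∧ ∃ j, v = atom A B C f j}

lemma atom_eq (f : ℕ) (j : Fin m) : atom A B C f j = C.mulVec (atomN A B f j) := by
  rw [atom, atomN, Matrix.mul_assoc, ← Matrix.mulVec_mulVec]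

lemma atomN_succ (f : ℕ) (j : Fin m) : atomN A B (f + 1) j = A.mulVec (atomN A B f j) := by
  rw [atomN, atomN, pow_succ', Matrix.mul_assoc, ← Matrix.mulVec_mulVec]

lemma Vsub_antitone : Antitone (Vsub A B C) := by
  refine antitone_nat_of_succ_le fun e => span_mono ?_
  rintro v ⟨f, hf, j, rfl⟩; exact ⟨f, by omega, j, rfl⟩

lemma Usub_succ (e : ℕ) : Usub A B (e + 1) = Submodule.map A.mulVecLin (Usub A B e) := by
  rw [Usub, Usub, Submodule.map_span]
  congr 1
  ext v
  constructor
  · rintro ⟨f, hf, j, rfl⟩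
    obtain ⟨g, rfl⟩ : ∃ g, f = g + 1 := ⟨f - 1, by omega⟩
    exact ⟨atomN A B g j, ⟨g, by omega, j, rfl⟩, (atomN_succ A B g j).symm⟩
  · rintro ⟨w, ⟨f, hf, j, rfl⟩, rfl⟩
    exact ⟨f + 1, by omega, j, (atomN_succ A B f j).symm⟩

lemma Usub_antitone : Antitone (Usub A B) := by
  refine antitone_nat_of_succ_le fun e => span_mono ?_
  rintro v ⟨f, hf, j, rfl⟩; exact ⟨f, by omega, j, rfl⟩

lemma Vsub_eq_map (e : ℕ) : Vsub A B C e = Submodule.map C.mulVecLin (Usub A B e) := by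
  rw [Vsub, Usub, Submodule.map_span]
  congr 1
  ext v
  constructor
  · rintro ⟨f, hf, j, rfl⟩
    exact ⟨atomN A B f j, ⟨f, hf, j, rfl⟩, by simp [Matrix.mulVecLin_apply, atom_eq]⟩
  · rintro ⟨w, ⟨f, hf, j, rfl⟩, rfl⟩
    exact ⟨f, hf, j, by simp [Matrix.mulVecLin_apply, atom_eq]⟩

/-- stabilization of U : for e ≥ N, U e = U N -/
lemma Usub_stab : ∀ f, N ≤ f → Usub A B f = Usub A B N := by
  -- first find e ≤ N with finrank equal
  have hmono := Usub_antitone A B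
  have key : ∃ e ≤ N, finrank ℝ (Usub A B (e+1)) = finrank ℝ (Usub A B e) := by
    by_contra h
    push_neg at h
    have hstrict : ∀ e ≤ N, finrank ℝ (Usub A B (e+1)) < finrank ℝ (Usub A B e) := by
      intro e he
      exact lt_of_le_of_ne (Submodule.finrank_mono (hmono (Nat.le_succ e))) (h e he)
    have hsum : ∀ k, k ≤ N + 1 → finrank ℝ (Usub A B k) + k ≤ finrank ℝ (Usub A B 0) := by
      intro k
      induction k with
      | zero => simp
      | succ t ih =>
        intro hk
        have h1 := hstrict t (by omega)
        have h2 := ih (by omega)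
        omega
    have h0 : finrank ℝ (Usub A B 0) ≤ N := by
      have := Submodule.finrank_le (Usub A B 0)
      simpa [Module.finrank_pi] using this
    have := hsum (N + 1) le_rfl
    omega
  obtain ⟨e, heN, heq⟩ := key
  have hstep : Usub A B (e + 1) = Usub A B e :=
    Submodule.eq_of_le_of_finrank_le (hmono (Nat.le_succ e)) (le_of_eq heq.symm)
  have hconst : ∀ g, e ≤ g → Usub A B g = Usub A B e := by
    intro g hg
    induction g with
    | zero => have he : e = 0 := Nat.le_zero.mp hg; rw [he]
    | succ t ih =>
      rcases Nat.lt_or_ge e (t+1) with h | h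
      · have ht : e ≤ t := by omega
        rw [Usub_succ, ih ht, ← Usub_succ, hstep]
      · have he : e = t + 1 := le_antisymm hg h
        rw [he]
  intro f hf
  rw [hconst f (by omega), hconst N (by omega)]

lemma Vsub_stab (f : ℕ) (hf : N ≤ f) : Vsub A B C f = Vsub A B C N := by
  rw [Vsub_eq_map, Vsub_eq_map, Usub_stab A B f hf]


lemma atom_apply (f : ℕ) (j : Fin m) : atom A B C f j = fun i => (C * A ^ f * B) i j := by
  funext i
  simp [atom, Matrix.mulVec_single]

/-- span of powers A^i, i < N -/
noncomputable def Pspan : Submodule ℝ (Matrix (Fin N) (Fin N) ℝ) :=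
  Submodule.span ℝ (Set.range fun i : Fin N => A ^ (i : ℕ))

lemma pow_mem_Pspan (hN : 0 < N) : ∀ f : ℕ, A ^ f ∈ Pspan A := by
  have haevalr : ∀ r : Polynomial ℝ, r.degree < (N : WithBot ℕ) →
      Polynomial.aeval A r ∈ Pspan A := by
    intro r hr
    rcases eq_or_ne r 0 with h | h
    · rw [h, map_zero]; exact zero_mem _
    have hd : r.natDegree < N := (Polynomial.natDegree_lt_iff_degree_lt h).2 hr
    rw [Polynomial.aeval_eq_sum_range]
    apply Submodule.sum_mem
    intro i hi
    have hiN : i < N := by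
      have := Finset.mem_range.mp hi
      omega
    exact Submodule.smul_mem _ _ (Submodule.subset_span ⟨⟨i, hiN⟩, rfl⟩)
  have hCH : A ^ N ∈ Pspan A := by
    set p := A.charpoly with hp
    have hdeg : p.natDegree = N := by
      rw [hp, Matrix.charpoly_natDegree_eq_dim, Fintype.card_fin]
    have hmonic : p.Monic := Matrix.charpoly_monic A
    have hrdeg : (p - Polynomial.X ^ N).degree < (N : WithBot ℕ) := by
      have h1 : p.degree = (Polynomial.X ^ N : Polynomial ℝ).degree := by
        rw [Polynomial.degree_X_pow, Polynomial.degree_eq_natDegree hmonic.ne_zero, hdeg]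
      have := Polynomial.degree_sub_lt h1 hmonic.ne_zero
        (by rw [Polynomial.leadingCoeff_X_pow]; exact hmonic)
      rw [h1, Polynomial.degree_X_pow] at this
      exact this
    have h0 := Matrix.aeval_self_charpoly A
    have hsplit : Polynomial.aeval A p
        = A ^ N + Polynomial.aeval A (p - Polynomial.X ^ N) := by
      have hpx : p = Polynomial.X ^ N + (p - Polynomial.X ^ N) := by ring
      conv_lhs => rw [hpx]
      rw [map_add, map_pow, Polynomial.aeval_X]
    rw [hsplit] at h0
    have : A ^ N = -(Polynomial.aeval A (p - Polynomial.X ^ N)) := by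
      linear_combination (norm := abel) h0
    rw [this]
    exact Submodule.neg_mem _ (haevalr _ hrdeg)
  have hclosed : ∀ M ∈ Pspan A, A * M ∈ Pspan A := by
    intro M hM
    induction hM using Submodule.span_induction with
    | mem x hx =>
      obtain ⟨i, rfl⟩ := hx
      rcases Nat.lt_or_ge ((i : ℕ) + 1) N with h | h
      · rw [← pow_succ']
        exact Submodule.subset_span ⟨⟨(i : ℕ) + 1, h⟩, rfl⟩
      · have : (i : ℕ) + 1 = N := by omega
        rw [← pow_succ', this]
        exact hCH
    | zero => rw [mul_zero]; exact zero_mem _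
    | add x y hx hy ihx ihy => rw [mul_add]; exact add_mem ihx ihy
    | smul a x hx ihx => rw [Matrix.mul_smul]; exact Submodule.smul_mem _ _ ihx
  intro f
  induction f with
  | zero => exact Submodule.subset_span ⟨⟨0, hN⟩, rfl⟩
  | succ g ih =>
    rw [pow_succ']
    exact hclosed _ ih

/-- ψ : M ↦ j-th column of C (A^e M) B -/
noncomputable def psi (e : ℕ) (j : Fin m) :
    Matrix (Fin N) (Fin N) ℝ →ₗ[ℝ] (Fin n → ℝ) where
  toFun M := fun i => (C * (A ^ e * M) * B) i j
  map_add' X Y := by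
    funext i
    simp [Matrix.mul_add, Matrix.add_mul]
  map_smul' c X := by
    funext i
    simp [Matrix.mul_smul, Matrix.smul_mul]

lemma psi_pow (e g : ℕ) (j : Fin m) : psi A B C e j (A ^ g) = atom A B C (e + g) j := by
  rw [atom_apply]
  show (fun i => (C * (A ^ e * A ^ g) * B) i j) = _
  rw [← pow_add]

lemma Vsub_eq_colspan (hN : 0 < N) (e : ℕ) :
    Vsub A B C e = Submodule.span ℝ (Set.range (C * A ^ e * ctrbMat A B)ᵀ) := by
  have hcol : ∀ p : Fin N × Fin m,
      (C * A ^ e * ctrbMat A B)ᵀ p = atom A B C (e + (N - 1 - (p.1 : ℕ))) p.2 := by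
    intro p
    rw [atom_apply]
    funext i
    show (C * A ^ e * ctrbMat A B) i p = _
    have : (C * A ^ e * ctrbMat A B) i p
        = ((C * A ^ e) * (A ^ (N - 1 - (p.1 : ℕ)) * B)) i p.2 := by
      rw [Matrix.mul_apply, Matrix.mul_apply]
      rfl
    rw [this, ← Matrix.mul_assoc, Matrix.mul_assoc C, ← pow_add]
  apply le_antisymm
  · rw [Vsub]
    apply Submodule.span_le.2
    rintro v ⟨f, hf, j, rfl⟩
    -- f = e + g
    obtain ⟨g, rfl⟩ : ∃ g, f = e + g := ⟨f - e, by omega⟩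
    have hg : A ^ g ∈ Pspan A := pow_mem_Pspan A hN g
    have : atom A B C (e + g) j ∈ Submodule.map (psi A B C e j) (Pspan A) :=
      ⟨A ^ g, hg, psi_pow A B C e g j⟩
    rw [Pspan, Submodule.map_span] at this
    refine Submodule.span_le.2 ?_ this
    rintro w ⟨_, ⟨i, rfl⟩, rfl⟩
    apply Submodule.subset_span
    refine ⟨(⟨N - 1 - (i : ℕ), by omega⟩, j), ?_⟩
    rw [hcol]
    simp only [psi_pow]
    have h2 := i.2
    have h3 : N - 1 - (N - 1 - (i : ℕ)) = (i : ℕ) := by omega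
    rw [h3]
  · apply Submodule.span_le.2
    rintro v ⟨p, rfl⟩
    rw [hcol]
    exact Submodule.subset_span ⟨e + (N - 1 - (p.1 : ℕ)), by omega, p.2, rfl⟩

lemma finrank_Vsub (hN : 0 < N) (e : ℕ) :
    finrank ℝ (Vsub A B C e) = (C * A ^ e * ctrbMat A B).rank := by
  rw [Vsub_eq_colspan A B C hN e]
  rw [show (C * A ^ e * ctrbMat A B).rank
      = finrank ℝ (LinearMap.range (C * A ^ e * ctrbMat A B).mulVecLin) from rfl,
    Matrix.range_mulVecLin]
  rfl


lemma greedy (Vv : Submodule ℝ (Fin n → ℝ)) (w : Fin m → Fin n → ℝ) (hw : ∀ j, w j ∈ Vv) :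
    ∀ (k : ℕ) (M : Submodule ℝ (Fin n → ℝ)), M ≤ Vv →
      Vv ≤ Submodule.span ℝ (Set.range w) ⊔ M → finrank ℝ Vv ≤ finrank ℝ M + k →
      ∃ S : Finset (Fin m), S.card ≤ k ∧ Vv ≤ Submodule.span ℝ (w '' ↑S) ⊔ M := by
  intro k
  induction k with
  | zero =>
    intro M hMV hVs hfr
    have hME : M = Vv := Submodule.eq_of_le_of_finrank_le hMV (by omega)
    exact ⟨∅, le_rfl, by rw [hME]; exact le_sup_right⟩
  | succ k ih =>
    intro M hMV hVs hfr
    by_cases hVM : Vv ≤ M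
    · exact ⟨∅, by simp, le_trans hVM le_sup_right⟩
    · have hex : ∃ j, w j ∉ M := by
        by_contra h
        push_neg at h
        have h1 : Submodule.span ℝ (Set.range w) ≤ M :=
          Submodule.span_le.2 (by rintro v ⟨j, rfl⟩; exact h j)
        exact hVM (le_trans hVs (sup_le h1 le_rfl))
      obtain ⟨j, hj⟩ := hex
      set M' := M ⊔ Submodule.span ℝ {w j} with hM'
      have hwjM' : w j ∈ M' :=
        Submodule.mem_sup_right (Submodule.mem_span_singleton_self (w j))
      have hM'V : M' ≤ Vv :=
        sup_le hMV (Submodule.span_le.2 (by rintro v hv; rw [Set.mem_singleton_iff] at hv; rw [hv]; exact hw j))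
      have hlt : M < M' := lt_of_le_of_ne le_sup_left (fun h => hj (h ▸ hwjM'))
      have hfr' : finrank ℝ Vv ≤ finrank ℝ M' + k := by
        have := Submodule.finrank_lt_finrank_of_lt hlt
        omega
      have hVs' : Vv ≤ Submodule.span ℝ (Set.range w) ⊔ M' :=
        le_trans hVs (sup_le_sup_left le_sup_left _)
      obtain ⟨S', hcard, hspan⟩ := ih M' hM'V hVs' hfr'
      refine ⟨insert j S', ?_, ?_⟩
      · calc (insert j S').card ≤ S'.card + 1 := Finset.card_insert_le _ _
          _ ≤ k + 1 := by omega
      · have hs1 : Submodule.span ℝ (w '' ↑S') ≤ Submodule.span ℝ (w '' ↑(insert j S')) :=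
          Submodule.span_mono (Set.image_mono (by simp [Finset.subset_insert]))
        have hs2 : Submodule.span ℝ {w j} ≤ Submodule.span ℝ (w '' ↑(insert j S')) :=
          Submodule.span_le.2 (by rintro v rfl; exact Submodule.subset_span ⟨j, by simp, rfl⟩)
        refine le_trans hspan ?_
        rw [hM']
        exact sup_le (hs1.trans le_sup_left)
          (sup_le le_sup_right (hs2.trans le_sup_left))

lemma greedy2 : ∀ (k : ℕ) (E : ℕ) (M : Submodule ℝ (Fin n → ℝ)), N ≤ E →
    M ≤ Vsub A B C N → finrank ℝ (Vsub A B C N) ≤ finrank ℝ M + k →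
    ∃ T : Finset (ℕ × Fin m), (∀ p ∈ T, E ≤ p.1) ∧
      (∀ p ∈ T, ∀ q ∈ T, p ≠ q → p.1 ≠ q.1) ∧
      Vsub A B C N ≤ Submodule.span ℝ ((fun p : ℕ × Fin m => atom A B C p.1 p.2) '' ↑T) ⊔ M := by
  intro k
  induction k with
  | zero =>
    intro E M hNE hMV hfr
    have hME : M = Vsub A B C N := Submodule.eq_of_le_of_finrank_le hMV (by omega)
    exact ⟨∅, by simp, by simp, by rw [hME]; exact le_sup_right⟩
  | succ k ih =>
    intro E M hNE hMV hfr
    by_cases hVM : Vsub A B C N ≤ M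
    · exact ⟨∅, by simp, by simp, le_trans hVM le_sup_right⟩
    · have hex : ∃ f, E ≤ f ∧ ∃ j, atom A B C f j ∉ M := by
        by_contra h
        push_neg at h
        apply hVM
        rw [← Vsub_stab A B C E hNE, Vsub]
        apply Submodule.span_le.2
        rintro v ⟨f, hf, j, rfl⟩
        exact h f hf j
      obtain ⟨f, hfE, j, hj⟩ := hex
      have hatomV : atom A B C f j ∈ Vsub A B C N := by
        have h1 : atom A B C f j ∈ Vsub A B C f :=
          Submodule.subset_span ⟨f, le_rfl, j, rfl⟩
        exact Vsub_antitone A B C (le_trans hNE hfE) h1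
      set M' := M ⊔ Submodule.span ℝ {atom A B C f j} with hM'
      have hwjM' : atom A B C f j ∈ M' :=
        Submodule.mem_sup_right (Submodule.mem_span_singleton_self _)
      have hM'V : M' ≤ Vsub A B C N :=
        sup_le hMV (Submodule.span_le.2
          (by rintro v hv; rw [Set.mem_singleton_iff] at hv; rw [hv]; exact hatomV))
      have hlt : M < M' := lt_of_le_of_ne le_sup_left (fun h => hj (h ▸ hwjM'))
      have hfr' : finrank ℝ (Vsub A B C N) ≤ finrank ℝ M' + k := by
        have := Submodule.finrank_lt_finrank_of_lt hlt
        omega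
      obtain ⟨T', hTE, hTd, hspan⟩ := ih (f + 1) M' (by omega) hM'V hfr'
      refine ⟨insert (f, j) T', ?_, ?_, ?_⟩
      · intro p hp
        rcases Finset.mem_insert.mp hp with h | h
        · rw [h]; exact hfE
        · have := hTE p h; omega
      · intro p hp q hq hpq
        rcases Finset.mem_insert.mp hp with h | h <;>
          rcases Finset.mem_insert.mp hq with h' | h'
        · exact absurd (h.trans h'.symm) hpq
        · have := hTE q h'; rw [h]; simp only; omega
        · have := hTE p h; rw [h']; simp only; omega
        · exact hTd p h q h' hpq
      · have hs1 : Submodule.span ℝ ((fun p : ℕ × Fin m => atom A B C p.1 p.2) '' ↑T')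
            ≤ Submodule.span ℝ ((fun p : ℕ × Fin m => atom A B C p.1 p.2) '' ↑(insert (f, j) T')) :=
          Submodule.span_mono (Set.image_mono (by simp [Finset.subset_insert]))
        have hs2 : Submodule.span ℝ {atom A B C f j}
            ≤ Submodule.span ℝ ((fun p : ℕ × Fin m => atom A B C p.1 p.2) '' ↑(insert (f, j) T')) :=
          Submodule.span_le.2 (by rintro v hv; rw [Set.mem_singleton_iff] at hv; rw [hv]
                                  exact Submodule.subset_span ⟨(f, j), by simp, rfl⟩)
        refine le_trans hspan ?_
        rw [hM']
        exact sup_le (hs1.trans le_sup_left)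
          (sup_le le_sup_right (hs2.trans le_sup_left))


lemma level (hN : 0 < N) {s : ℕ} (hs : 0 < s)
    (hcap : ∀ e, e < N →
      min m (finrank ℝ (Vsub A B C e) - finrank ℝ (Vsub A B C (e + 1))) ≤ s) :
    ∀ t e, e + t = N →
      ∃ D : Finset (ℕ × Fin m), (∀ p ∈ D, e ≤ p.1) ∧
        (∀ f : ℕ, ((D.filter (fun p => p.1 = f)).card ≤ s)) ∧
        Vsub A B C e ≤ Submodule.span ℝ ((fun p : ℕ × Fin m => atom A B C p.1 p.2) '' ↑D) := by
  intro t
  induction t with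
  | zero =>
    intro e he
    have heN : e = N := by omega
    subst heN
    obtain ⟨T, hTE, hTd, hsp⟩ :=
      greedy2 A B C (finrank ℝ (Vsub A B C e)) e ⊥ le_rfl bot_le (by simp)
    refine ⟨T, hTE, ?_, by simpa using hsp⟩
    intro f
    have h1 : (T.filter (fun p => p.1 = f)).card ≤ 1 := by
      rw [Finset.card_le_one]
      intro a ha b hb
      rw [Finset.mem_filter] at ha hb
      by_contra hab
      exact hTd a ha.1 b hb.1 hab (ha.2.trans hb.2.symm)
    omega
  | succ t ih =>
    intro e he
    obtain ⟨D', hD'e, hD'c, hD's⟩ := ih (e + 1) (by omega)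
    have heN : e < N := by omega
    have hw : ∀ j, atom A B C e j ∈ Vsub A B C e :=
      fun j => Submodule.subset_span ⟨e, le_rfl, j, rfl⟩
    have hmle : Vsub A B C (e + 1) ≤ Vsub A B C e := Vsub_antitone A B C (Nat.le_succ e)
    have hsup : Vsub A B C e ≤
        Submodule.span ℝ (Set.range fun j => atom A B C e j) ⊔ Vsub A B C (e + 1) := by
      rw [Vsub]
      apply Submodule.span_le.2
      rintro v ⟨f, hf, j, rfl⟩
      rcases eq_or_lt_of_le hf with h | h
      · exact Submodule.mem_sup_left (Submodule.subset_span ⟨j, by rw [h]⟩)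
      · exact Submodule.mem_sup_right (Submodule.subset_span ⟨f, by omega, j, rfl⟩)
    obtain ⟨S, hScard, hSspan⟩ := greedy (Vsub A B C e) (fun j => atom A B C e j) hw
      (finrank ℝ (Vsub A B C e) - finrank ℝ (Vsub A B C (e + 1)))
      (Vsub A B C (e + 1)) hmle hsup
      (by have := Submodule.finrank_mono hmle; omega)
    have hSm : S.card ≤ m := by
      have := Finset.card_le_univ S
      simpa using this
    have hSs : S.card ≤ s := le_trans (le_min hSm hScard) (hcap e heN)
    refine ⟨D' ∪ S.image (fun j => (e, j)), ?_, ?_, ?_⟩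
    · intro p hp
      rcases Finset.mem_union.mp hp with h | h
      · have := hD'e p h; omega
      · obtain ⟨j, hj, rfl⟩ := Finset.mem_image.mp h
        exact le_rfl
    · intro f
      rw [Finset.filter_union]
      refine le_trans (Finset.card_union_le _ _) ?_
      rcases eq_or_ne f e with h | h
      · subst h
        have h1 : (D'.filter (fun p => p.1 = f)).card = 0 := by
          rw [Finset.card_eq_zero, Finset.filter_eq_empty_iff]
          intro p hp
          have := hD'e p hp
          omega
        have h2 : ((S.image (fun j => (f, j))).filter (fun p => p.1 = f)).card ≤ S.card :=
          le_trans (Finset.card_filter_le _ _) (Finset.card_image_le)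
        omega
      · have h1 : ((S.image (fun j => (e, j))).filter (fun p => p.1 = f)).card = 0 := by
          rw [Finset.card_eq_zero, Finset.filter_eq_empty_iff]
          intro p hp
          obtain ⟨j, hj, rfl⟩ := Finset.mem_image.mp hp
          simp only
          exact fun hc => h hc.symm
        have h2 := hD'c f
        omega
    · refine le_trans hSspan (sup_le ?_ ?_)
      · apply Submodule.span_le.2
        rintro v ⟨j, hj, rfl⟩
        apply Submodule.subset_span
        exact ⟨(e, j), by
          rw [Finset.coe_union, Finset.coe_image]
          exact Or.inr ⟨j, hj, rfl⟩, rfl⟩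
      · refine le_trans hD's (Submodule.span_mono (Set.image_mono ?_))
        intro p hp
        rw [Finset.coe_union]
        exact Or.inl hp


lemma represent {s : ℕ} (D : Finset (ℕ × Fin m))
    (hDc : ∀ f : ℕ, ((D.filter (fun p => p.1 = f)).card ≤ s))
    (K0 : ℕ) (hK0 : ∀ p ∈ D, p.1 < K0) (z : Fin n → ℝ)
    (hz : z ∈ Submodule.span ℝ ((fun p : ℕ × Fin m => atom A B C p.1 p.2) '' ↑D)) :
    ∃ u : ℕ → Fin m → ℝ, (∀ f, (Function.support (u f)).ncard ≤ s) ∧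
      ∑ f ∈ Finset.range K0, (C * A ^ f * B).mulVec (u f) = z := by
  rw [Set.image_eq_range] at hz
  obtain ⟨c, hc⟩ := mem_span_range_iff_exists_fun ℝ |>.mp hz
  set u : ℕ → Fin m → ℝ := fun f =>
    ∑ p : ↥(↑D : Set (ℕ × Fin m)),
      if (p : ℕ × Fin m).1 = f
        then c p • (Pi.single ((p : ℕ × Fin m).2) (1 : ℝ) : Fin m → ℝ)
        else (0 : Fin m → ℝ) with hu
  refine ⟨u, ?_, ?_⟩
  · intro f
    have hsub : Function.support (u f) ⊆
        ↑((D.filter (fun p => p.1 = f)).image Prod.snd) := by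
      intro j' hj'
      by_contra hmem
      apply hj'
      rw [hu]
      simp only [Finset.sum_apply]
      apply Finset.sum_eq_zero
      intro p _
      by_cases hp : (p : ℕ × Fin m).1 = f
      · have hp2 : (p : ℕ × Fin m).2 ∈ (D.filter (fun q => q.1 = f)).image Prod.snd := by
          apply Finset.mem_image_of_mem
          rw [Finset.mem_filter]
          exact ⟨p.2, hp⟩
        have hne : j' ≠ (p : ℕ × Fin m).2 := fun h => hmem (h ▸ hp2)
        simp [hp, Pi.single_apply, hne]
      · simp [hp]
    calc (Function.support (u f)).ncard
        ≤ (↑((D.filter (fun p => p.1 = f)).image Prod.snd) : Set (Fin m)).ncard :=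
          Set.ncard_le_ncard hsub (Set.toFinite _)
      _ = ((D.filter (fun p => p.1 = f)).image Prod.snd).card := Set.ncard_coe_finset _
      _ ≤ (D.filter (fun p => p.1 = f)).card := Finset.card_image_le
      _ ≤ s := hDc f
  · have h1 : ∀ f, (C * A ^ f * B).mulVec (u f)
        = ∑ p : ↥(↑D : Set (ℕ × Fin m)),
            if (p : ℕ × Fin m).1 = f
              then c p • atom A B C (p : ℕ × Fin m).1 (p : ℕ × Fin m).2 else 0 := by
      intro f
      rw [hu]
      rw [show (C * A ^ f * B).mulVec = (C * A ^ f * B).mulVecLin from rfl, map_sum]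
      congr 1
      funext p
      split_ifs with h
      · subst h
        rw [LinearMap.map_smul]
        rfl
      · exact map_zero _
    calc ∑ f ∈ Finset.range K0, (C * A ^ f * B).mulVec (u f)
        = ∑ f ∈ Finset.range K0, ∑ p : ↥(↑D : Set (ℕ × Fin m)),
            (if (p : ℕ × Fin m).1 = f
              then c p • atom A B C (p : ℕ × Fin m).1 (p : ℕ × Fin m).2 else 0) := by
          exact Finset.sum_congr rfl fun f _ => h1 f
      _ = ∑ p : ↥(↑D : Set (ℕ × Fin m)), ∑ f ∈ Finset.range K0,
            (if (p : ℕ × Fin m).1 = f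
              then c p • atom A B C (p : ℕ × Fin m).1 (p : ℕ × Fin m).2 else 0) :=
          Finset.sum_comm
      _ = ∑ p : ↥(↑D : Set (ℕ × Fin m)),
            c p • atom A B C (p : ℕ × Fin m).1 (p : ℕ × Fin m).2 := by
          apply Finset.sum_congr rfl
          intro p _
          rw [Finset.sum_ite_eq]
          have : (p : ℕ × Fin m).1 ∈ Finset.range K0 :=
            Finset.mem_range.mpr (hK0 _ p.2)
          simp [this]
      _ = z := hc


end OSCaux

open OSCaux Module in
theorem output_sparse_controllable_sufficient' {N m n : ℕ}
    (A : Matrix (Fin N) (Fin N) ℝ) (B : Matrix (Fin N) (Fin m) ℝ)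
    (C : Matrix (Fin n) (Fin N) ℝ) (s : ℕ) (hs : 0 < s) (hsm : s ≤ m)
    (hrank : (C * ctrbMat A B).rank = n)
    (hbound : min m ((Finset.range N).sup (fun i =>
        (C * A ^ i * ctrbMat A B).rank - (C * A ^ (i + 1) * ctrbMat A B).rank)) ≤ s) :
    ∀ x0 : Fin N → ℝ, ∀ yf : Fin n → ℝ, ∃ K : ℕ, 0 < K ∧ ∃ u : Fin K → Fin m → ℝ,
      (∀ k, (Function.support (u k)).ncard ≤ s) ∧
      C.mulVec ((∑ k : Fin K, (A ^ (K - 1 - (k : ℕ))).mulVec (B.mulVec (u k)))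
        + (A ^ K).mulVec x0) = yf := by
  rcases Nat.eq_zero_or_pos n with hn | hn
  · subst hn
    intro x0 yf
    refine ⟨1, one_pos, fun _ _ => 0, by simp, funext fun i => i.elim0⟩
  have hN : 0 < N := by
    by_contra h
    have hN0 : N = 0 := by omega
    have := Matrix.rank_le_card_width (C * ctrbMat A B)
    rw [hrank] at this
    simp [hN0] at this
    omega
  -- V 0 = ⊤
  have hV0 : Vsub A B C 0 = ⊤ := by
    apply Submodule.eq_top_of_finrank_eq
    rw [finrank_Vsub A B C hN 0]
    rw [pow_zero, Matrix.mul_one, hrank]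
    simp [Module.finrank_pi]
  -- capacity bound
  have hcap : ∀ e, e < N →
      min m (finrank ℝ (Vsub A B C e) - finrank ℝ (Vsub A B C (e + 1))) ≤ s := by
    intro e he
    rcases min_le_iff.mp hbound with h | h
    · exact le_trans (min_le_left _ _) h
    · refine le_trans (le_trans (min_le_right _ _) ?_) h
      rw [finrank_Vsub A B C hN e, finrank_Vsub A B C hN (e + 1)]
      exact Finset.le_sup (f := fun i =>
        (C * A ^ i * ctrbMat A B).rank - (C * A ^ (i + 1) * ctrbMat A B).rank)
        (Finset.mem_range.mpr he)
  obtain ⟨D, hDe, hDc, hDs⟩ := level A B C hN hs hcap N 0 (by omega)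
  set K : ℕ := D.sup (fun p => p.1) + 1 with hK
  have hK0 : ∀ p ∈ D, p.1 < K := by
    intro p hp
    have h := Finset.le_sup (f := fun q : ℕ × Fin m => q.1) hp
    omega
  intro x0 yf
  set z : Fin n → ℝ := yf - C.mulVec ((A ^ K).mulVec x0) with hz
  have hzmem : z ∈ Submodule.span ℝ ((fun p : ℕ × Fin m => atom A B C p.1 p.2) '' ↑D) :=
    hDs (by rw [hV0]; trivial)
  obtain ⟨u, husupp, husum⟩ := represent A B C D hDc K hK0 z hzmem
  refine ⟨K, by omega, fun k => u (K - 1 - (k : ℕ)), fun k => husupp _, ?_⟩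
  rw [Matrix.mulVec_add]
  have hsum : C.mulVec (∑ k : Fin K, (A ^ (K - 1 - (k : ℕ))).mulVec
      (B.mulVec (u (K - 1 - (k : ℕ))))) = z := by
    have h1 : ∀ e : ℕ, C.mulVec ((A ^ e).mulVec (B.mulVec (u e)))
        = (C * A ^ e * B).mulVec (u e) := by
      intro e
      rw [Matrix.mulVec_mulVec, Matrix.mulVec_mulVec, Matrix.mul_assoc]
    have h2 : C.mulVec (∑ k : Fin K, (A ^ (K - 1 - (k : ℕ))).mulVec
        (B.mulVec (u (K - 1 - (k : ℕ)))))
        = ∑ k : Fin K, C.mulVec ((A ^ (K - 1 - (k : ℕ))).mulVec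
            (B.mulVec (u (K - 1 - (k : ℕ))))) := by
      rw [show C.mulVec = C.mulVecLin from rfl, map_sum]
    rw [h2]
    calc ∑ k : Fin K, C.mulVec ((A ^ (K - 1 - (k : ℕ))).mulVec
            (B.mulVec (u (K - 1 - (k : ℕ)))))
        = ∑ k : Fin K, (C * A ^ (K - 1 - (k : ℕ)) * B).mulVec (u (K - 1 - (k : ℕ))) :=
          Finset.sum_congr rfl fun k _ => h1 _
      _ = ∑ f ∈ Finset.range K, (C * A ^ (K - 1 - f) * B).mulVec (u (K - 1 - f)) :=
          Fin.sum_univ_eq_sum_range (fun f => (C * A ^ (K - 1 - f) * B).mulVec (u (K - 1 - f))) K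
      _ = ∑ f ∈ Finset.range K, (C * A ^ f * B).mulVec (u f) :=
          Finset.sum_range_reflect (fun f => (C * A ^ f * B).mulVec (u f)) K
      _ = z := husum
  rw [hsum, hz]
  abel


/-- Sufficiency: if `rank(C·W) = n` and `s ≥ min{m, max_{0≤i≤N−1} R_i}` with
`R_i = rank(C A^i W) − rank(C A^{i+1} W)`, then the system is output `s`-sparse
controllable. -/
theorem output_sparse_controllable_sufficient {N m n : ℕ}
    (A : Matrix (Fin N) (Fin N) ℝ) (B : Matrix (Fin N) (Fin m) ℝ)
    (C : Matrix (Fin n) (Fin N) ℝ) (s : ℕ) (hs : 0 < s) (hsm : s ≤ m)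
    (hrank : (C * ctrbMat A B).rank = n)
    (hbound : min m ((Finset.range N).sup (fun i =>
        (C * A ^ i * ctrbMat A B).rank - (C * A ^ (i + 1) * ctrbMat A B).rank)) ≤ s) :
    OutputSparseControllable A B C s := by
  unfold OutputSparseControllable
  exact output_sparse_controllable_sufficient' A B C s hs hsm hrank hbound
end

section
/- If rank(C·W) = n and s ≥ min{m, N − rank(A)}, then the system (A,B,C) is output s-sparse controllable. In particular, if A is invertible, output controllability implies output s-sparse controllability for every s ≥ 1. -/
open Matrix

open Submodule Set Module

namespace OutputSparseAux

/-- Cayley–Hamilton closure: every power hits the span of the first `N` powers. -/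
lemma pow_mulVec_mem_span {N : ℕ} (A : Matrix (Fin N) (Fin N) ℝ)
    (x : Fin N → ℝ) (c : ℕ) :
    (A ^ c) *ᵥ x ∈ Submodule.span ℝ (Set.range fun i : Fin N => (A ^ (i : ℕ)) *ᵥ x) := by
  induction c using Nat.strong_induction_on with
  | _ c ih =>
    by_cases hc : c < N
    · exact subset_span ⟨⟨c, hc⟩, rfl⟩
    · push_neg at hc
      have hpow : A ^ N = -(∑ i ∈ Finset.range N, A.charpoly.coeff i • A ^ i) := by
        have h0 := A.aeval_self_charpoly
        rw [Polynomial.aeval_eq_sum_range (p := A.charpoly) A] at h0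
        rw [A.charpoly_natDegree_eq_dim, Fintype.card_fin, Finset.sum_range_succ] at h0
        have hm : A.charpoly.coeff (A.charpoly.natDegree) = 1 := A.charpoly_monic.coeff_natDegree
        rw [A.charpoly_natDegree_eq_dim, Fintype.card_fin] at hm
        rw [hm, one_smul] at h0
        linear_combination (norm := (push_cast; abel)) h0
      have hAc : A ^ c = A ^ (c - N) * A ^ N := by
        rw [← pow_add]; congr 1; omega
      rw [hAc, hpow]
      have : (A ^ (c - N) * -(∑ i ∈ Finset.range N, A.charpoly.coeff i • A ^ i)) *ᵥ x
          = -(∑ i ∈ Finset.range N, A.charpoly.coeff i • ((A ^ (c - N + i)) *ᵥ x)) := by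
        rw [Matrix.mul_neg, Finset.mul_sum]
        rw [Matrix.neg_mulVec]
        congr 1
        have hsum : ∀ (t : Finset ℕ) (f : ℕ → Matrix (Fin N) (Fin N) ℝ),
            (∑ i ∈ t, f i) *ᵥ x = ∑ i ∈ t, (f i) *ᵥ x := by
          intro t f
          ext r
          simp only [Matrix.mulVec, dotProduct, Matrix.sum_apply, Finset.sum_mul, Finset.sum_apply]
          rw [Finset.sum_comm]
        rw [hsum]
        exact Finset.sum_congr rfl fun i hi => by
          rw [Matrix.mul_smul, Matrix.smul_mulVec, ← pow_add]
      rw [this]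
      refine neg_mem (Submodule.sum_mem _ fun i hi => Submodule.smul_mem _ _ ?_)
      exact ih _ (by simp at hi; omega)

section Defs
variable {N m : ℕ} (A : Matrix (Fin N) (Fin N) ℝ) (B : Matrix (Fin N) (Fin m) ℝ)

/-- column `j` of `B` -/
def bcol (j : Fin m) : Fin N → ℝ := fun i => B i j

/-- Krylov space of a single column. -/
def colK (j : Fin m) : Submodule ℝ (Fin N → ℝ) :=
  span ℝ (Set.range fun i : Fin N => (A ^ (i : ℕ)) *ᵥ bcol B j)

/-- Full Krylov space. -/
def Kry : Submodule ℝ (Fin N → ℝ) := ⨆ j : Fin m, colK A B j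

/-- masking linear map -/
def maskL (S : Finset (Fin m)) : (Fin m → ℝ) →ₗ[ℝ] (Fin m → ℝ) where
  toFun u := fun j => if j ∈ S then u j else 0
  map_add' u v := by funext j; by_cases h : j ∈ S <;> simp [h]
  map_smul' c u := by funext j; by_cases h : j ∈ S <;> simp [h]

/-- The input-to-state map over `K` steps with supports forced by `σ`. -/
noncomputable def sysL (K : ℕ) (σ : Fin K → Finset (Fin m)) : (Fin K → Fin m → ℝ) →ₗ[ℝ] (Fin N → ℝ) :=
  ∑ k : Fin K, (Matrix.mulVecLin (A ^ (K - 1 - (k : ℕ)) * B)) ∘ₗ (maskL (σ k)) ∘ₗ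
    (LinearMap.proj k)

end Defs

section Lemmas
variable {N m : ℕ} (A : Matrix (Fin N) (Fin N) ℝ) (B : Matrix (Fin N) (Fin m) ℝ)

lemma mem_colK (c : ℕ) (j : Fin m) : (A ^ c) *ᵥ bcol B j ∈ colK A B j :=
  pow_mulVec_mem_span A (bcol B j) c

lemma map_pow_colK_le (c : ℕ) (j : Fin m) :
    Submodule.map (Matrix.mulVecLin (A ^ c)) (colK A B j) ≤ colK A B j := by
  rw [colK, Submodule.map_span, span_le]
  rintro x ⟨y, ⟨i, rfl⟩, rfl⟩
  simp only [mulVecLin_apply, Matrix.mulVec_mulVec, ← pow_add]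
  exact mem_colK A B _ j

lemma maskL_apply_of_support {S : Finset (Fin m)} {v : Fin m → ℝ}
    (h : Function.support v ⊆ ↑S) : maskL S v = v := by
  funext j
  by_cases hj : j ∈ S
  · simp [maskL, hj]
  · simp only [maskL, LinearMap.coe_mk, AddHom.coe_mk, if_neg hj]
    by_contra hv
    exact hj (h (Function.mem_support.2 fun h0 => hv h0.symm))

lemma support_maskL (S : Finset (Fin m)) (v : Fin m → ℝ) :
    Function.support (maskL S v) ⊆ ↑S := by
  intro j hj
  simp only [maskL, LinearMap.coe_mk, AddHom.coe_mk, Function.mem_support] at hj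
  by_contra h
  exact hj (if_neg h)

lemma sysL_apply (K : ℕ) (σ : Fin K → Finset (Fin m)) (u : Fin K → Fin m → ℝ) :
    sysL A B K σ u = ∑ k : Fin K, (A ^ (K - 1 - (k : ℕ))) *ᵥ (B *ᵥ maskL (σ k) (u k)) := by
  simp [sysL, LinearMap.sum_apply, Matrix.mulVec_mulVec]

lemma slot_mem_range (K : ℕ) (σ : Fin K → Finset (Fin m)) (k : Fin K) {j : Fin m}
    (hj : j ∈ σ k) : (A ^ (K - 1 - (k : ℕ))) *ᵥ bcol B j ∈ LinearMap.range (sysL A B K σ) := by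
  classical
  refine ⟨Pi.single k (Pi.single j 1), ?_⟩
  rw [sysL_apply]
  rw [Finset.sum_eq_single k]
  · have h1 : maskL (σ k) ((Pi.single k (Pi.single j (1:ℝ)) : Fin K → Fin m → ℝ) k)
        = Pi.single j 1 := by
      rw [Pi.single_eq_same]
      apply maskL_apply_of_support
      intro r hr
      rcases Function.mem_support.1 hr with h
      have : r = j := by
        by_contra hne
        exact h (Pi.single_eq_of_ne hne 1)
      subst this; exact hj
    rw [h1, Matrix.mulVec_single_one]
    funext i
    simp [bcol, Matrix.transpose_apply, Matrix.mul_apply, Matrix.mulVec, dotProduct]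
  · intro k' _ hk'
    rw [Pi.single_eq_of_ne hk', map_zero, Matrix.mulVec_zero, Matrix.mulVec_zero]
  · intro h; exact absurd (Finset.mem_univ k) h

lemma slot_span_le_range (K : ℕ) (σ : Fin K → Finset (Fin m)) (k : Fin K) :
    Submodule.map (Matrix.mulVecLin (A ^ (K - 1 - (k : ℕ))))
      (span ℝ (bcol B '' ↑(σ k))) ≤ LinearMap.range (sysL A B K σ) := by
  rw [Submodule.map_span, span_le]
  rintro x ⟨y, ⟨j, hj, rfl⟩, rfl⟩
  exact slot_mem_range A B K σ k hj

end Lemmas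


section More
variable {N m : ℕ} (A : Matrix (Fin N) (Fin N) ℝ) (B : Matrix (Fin N) (Fin m) ℝ)

lemma map_pow_Kry_le (c : ℕ) :
    Submodule.map (Matrix.mulVecLin (A ^ c)) (Kry A B) ≤ Kry A B := by
  rw [Kry, Submodule.map_iSup]
  exact iSup_le fun j => le_trans (Submodule.map_mono (le_refl _) |>.trans (map_pow_colK_le A B c j)) (le_iSup _ j)

lemma map_pow_Kry_antitone {c c' : ℕ} (h : c ≤ c') :
    Submodule.map (Matrix.mulVecLin (A ^ c')) (Kry A B)
      ≤ Submodule.map (Matrix.mulVecLin (A ^ c)) (Kry A B) := by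
  have hc : A ^ c' = A ^ c * A ^ (c' - c) := by rw [← pow_add]; congr 1; omega
  rw [hc, Matrix.mulVecLin_mul, Submodule.map_comp]
  exact Submodule.map_mono (map_pow_Kry_le A B (c' - c))

/-- an antitone sequence of naturals is eventually constant -/
lemma nat_eventually_const (f : ℕ → ℕ) (hf : ∀ i j, i ≤ j → f j ≤ f i) :
    ∃ c₀, ∀ c, c₀ ≤ c → f c = f c₀ := by
  have hne : (Set.range f).Nonempty := ⟨f 0, 0, rfl⟩
  obtain ⟨c₀, hc₀⟩ := Nat.sInf_mem hne
  refine ⟨c₀, fun c hc => le_antisymm (hf _ _ hc) ?_⟩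
  rw [hc₀]; exact Nat.sInf_le ⟨c, rfl⟩

lemma stab : ∃ c₀ : ℕ, ∀ c, c₀ ≤ c →
    Submodule.map (Matrix.mulVecLin (A ^ c)) (Kry A B)
      = Submodule.map (Matrix.mulVecLin (A ^ c₀)) (Kry A B) := by
  obtain ⟨c₀, hc₀⟩ := nat_eventually_const
    (fun c => Module.finrank ℝ (Submodule.map (Matrix.mulVecLin (A ^ c)) (Kry A B)))
    (fun i j hij => Submodule.finrank_mono (map_pow_Kry_antitone A B hij))
  exact ⟨c₀, fun c hc => Submodule.eq_of_le_of_finrank_eq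
    (map_pow_Kry_antitone A B hc) (hc₀ c hc)⟩




lemma exists_support (hN : 0 < N) (hm : 0 < m) :
    ∃ S : Finset (Fin m), S.card ≤ N - A.rank ∧
      Kry A B ≤ Submodule.map (Matrix.mulVecLin A) (Kry A B) ⊔ span ℝ (bcol B '' ↑S) := by
  classical
  set 𝒦 := Kry A B with h𝒦
  set Q := Submodule.map (Matrix.mulVecLin A) (Kry A B) with hQ
  have hQK : Q ≤ 𝒦 := by
    have := map_pow_Kry_le A B 1
    rwa [pow_one] at this
  set π := Q.mkQ with hπ
  -- the image of 𝒦 in the quotient is spanned by the images of the columns of B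
  have hb𝒦 : ∀ j, bcol B j ∈ 𝒦 := by
    intro j
    have : (A ^ ((⟨0, hN⟩ : Fin N) : ℕ)) *ᵥ bcol B j ∈ colK A B j := subset_span ⟨_, rfl⟩
    simpa [Matrix.one_mulVec, h𝒦, Kry] using le_iSup (colK A B) j this
  have h𝒦span : Submodule.map π 𝒦 = span ℝ (Set.range fun j => π (bcol B j)) := by
    apply le_antisymm
    · rw [h𝒦, Kry, Submodule.map_iSup]
      refine iSup_le fun j => ?_
      rw [colK, Submodule.map_span, span_le]
      rintro x ⟨y, ⟨i, rfl⟩, rfl⟩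
      show π ((A ^ (i : ℕ)) *ᵥ bcol B j) ∈ _
      by_cases hi : (i : ℕ) = 0
      · rw [hi]
        simp only [pow_zero, Matrix.one_mulVec]
        exact subset_span ⟨j, rfl⟩
      · obtain ⟨i', hi'⟩ : ∃ i', (i : ℕ) = i' + 1 := ⟨(i : ℕ) - 1, by omega⟩
        have hmem : (A ^ (i : ℕ)) *ᵥ bcol B j ∈ Q := by
          rw [hQ]
          refine ⟨(A ^ i') *ᵥ bcol B j, le_iSup (colK A B) j (mem_colK A B _ j), ?_⟩
          rw [mulVecLin_apply, Matrix.mulVec_mulVec, ← pow_succ', ← hi']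
        have hz : π ((A ^ (i : ℕ)) *ᵥ bcol B j) = 0 := (Submodule.Quotient.mk_eq_zero Q).2 hmem
        rw [hz]
        exact Submodule.zero_mem _
    · rw [span_le]
      rintro x ⟨j, rfl⟩
      exact ⟨bcol B j, hb𝒦 j, rfl⟩
  -- dimension bound for the image
  have hdim : Module.finrank ℝ (Submodule.map π 𝒦) ≤ N - A.rank := by
    have e1 := LinearMap.finrank_range_add_finrank_ker (π.domRestrict 𝒦)
    have e2 := LinearMap.finrank_range_add_finrank_ker (A.mulVecLin.domRestrict 𝒦)
    have e3 := LinearMap.finrank_range_add_finrank_ker A.mulVecLin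
    rw [LinearMap.range_domRestrict] at e1 e2
    have hrk : Module.finrank ℝ (LinearMap.range A.mulVecLin) = A.rank := rfl
    have hN' : Module.finrank ℝ (Fin N → ℝ) = N := by
      rw [Module.finrank_pi]; exact Fintype.card_fin N
    rw [hrk, hN'] at e3
    -- finrank Q ≤ finrank (ker (π.domRestrict 𝒦))
    have f1 : Module.finrank ℝ (LinearMap.ker (π.domRestrict 𝒦)) = Module.finrank ℝ Q := by
      rw [hπ, LinearMap.ker_domRestrict, Submodule.ker_mkQ]
      exact (LinearEquiv.finrank_eq (Submodule.comapSubtypeEquivOfLe hQK))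
    have f2 : Module.finrank ℝ (LinearMap.ker (A.mulVecLin.domRestrict 𝒦))
        ≤ Module.finrank ℝ (LinearMap.ker A.mulVecLin) := by
      rw [LinearMap.ker_domRestrict]
      rw [← Submodule.finrank_map_subtype_eq]
      exact Submodule.finrank_mono (Submodule.map_comap_le _ _)
    have hQ' : Submodule.map A.mulVecLin 𝒦 = Q := by rw [hQ, h𝒦]
    rw [hQ'] at e2
    rw [f1] at e1
    omega
  -- extract at most `N - rank A` columns spanning the image in the quotient
  obtain ⟨t, hts, hspan, hind⟩ :=
    exists_linearIndependent ℝ (Set.range fun j => π (bcol B j))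
  have htfin : t.Finite := hind.setFinite
  haveI : Fintype t := htfin.fintype
  have hcard : t.toFinset.card ≤ N - A.rank := by
    rw [← finrank_span_set_eq_card hind, hspan, ← h𝒦span]
    exact hdim
  -- pick column indices realizing the elements of `t`
  have hpick : ∀ y ∈ t, ∃ j : Fin m, π (bcol B j) = y := fun y hy => hts hy
  let pick : ((Fin N → ℝ) ⧸ Q) → Fin m := fun y =>
    if h : ∃ j : Fin m, π (bcol B j) = y then h.choose else ⟨0, hm⟩
  refine ⟨t.toFinset.image pick, le_trans Finset.card_image_le hcard, ?_⟩
  -- conclude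
  set S := t.toFinset.image pick with hS
  set W := Q ⊔ span ℝ (bcol B '' ↑S) with hW
  have ht_sub : t ⊆ (fun j => π (bcol B j)) '' ↑S := by
    intro y hy
    obtain h := hpick y hy
    refine ⟨pick y, ?_, ?_⟩
    · exact Finset.mem_coe.2 (Finset.mem_image.2 ⟨y, Set.mem_toFinset.2 hy, rfl⟩)
    · simp only [pick, dif_pos h]
      exact h.choose_spec
  have h1 : Submodule.map π 𝒦 ≤ Submodule.map π W := by
    rw [h𝒦span, ← hspan]
    refine le_trans (span_mono ht_sub) ?_
    have himg : (fun j => π (bcol B j)) '' ↑S = π '' (bcol B '' ↑S) :=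
      (Set.image_image _ _ _).symm
    rw [himg, ← Submodule.map_span]
    exact Submodule.map_mono le_sup_right
  calc 𝒦 ≤ Submodule.comap π (Submodule.map π 𝒦) := Submodule.le_comap_map _ _
    _ ≤ Submodule.comap π (Submodule.map π W) := Submodule.comap_mono h1
    _ = W ⊔ LinearMap.ker π := Submodule.comap_map_eq _ _
    _ = W := by rw [hπ, Submodule.ker_mkQ]; exact sup_eq_left.2 (le_sup_left.trans (le_of_eq hW.symm))



lemma unroll (S : Finset (Fin m))
    (h1 : Kry A B ≤ Submodule.map (Matrix.mulVecLin A) (Kry A B) ⊔ span ℝ (bcol B '' ↑S)) :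
    ∀ c : ℕ, Kry A B ≤ Submodule.map (Matrix.mulVecLin (A ^ c)) (Kry A B) ⊔
      (Finset.range c).sup
        (fun i => Submodule.map (Matrix.mulVecLin (A ^ i)) (span ℝ (bcol B '' ↑S))) := by
  intro c
  induction c with
  | zero =>
    rw [pow_zero, Matrix.mulVecLin_one, Submodule.map_id]
    exact le_sup_left
  | succ c ih =>
    have h2 : Submodule.map (Matrix.mulVecLin (A ^ c)) (Kry A B) ≤
        Submodule.map (Matrix.mulVecLin (A ^ (c+1))) (Kry A B) ⊔
          Submodule.map (Matrix.mulVecLin (A ^ c)) (span ℝ (bcol B '' ↑S)) := by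
      refine le_trans (Submodule.map_mono h1) ?_
      rw [Submodule.map_sup, pow_succ, Matrix.mulVecLin_mul, Submodule.map_comp]
    refine le_trans ih ?_
    rw [Finset.range_add_one, Finset.sup_insert]
    refine sup_le (le_trans h2 ?_) ?_
    · exact sup_le le_sup_left (le_sup_of_le_right le_sup_left)
    · exact le_sup_of_le_right le_sup_right

lemma exists_sigma_hard (s : ℕ) (hN : 0 < N) (hm : 0 < m) (hs : 0 < s)
    (hd : N - A.rank ≤ s) :
    ∃ K : ℕ, 0 < K ∧ ∃ σ : Fin K → Finset (Fin m), (∀ k, (σ k).card ≤ s) ∧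
      Kry A B ≤ LinearMap.range (sysL A B K σ) := by
  classical
  obtain ⟨S, hScard, hSle⟩ := exists_support A B hN hm
  obtain ⟨c₀, hc₀⟩ := stab A B
  set K := c₀ + m * N with hK
  have hKpos : 0 < K := by positivity
  have hdiv : ∀ k : Fin K, (k : ℕ) < m * N → (k : ℕ) / N < m := by
    intro k hk
    rw [Nat.div_lt_iff_lt_mul hN]
    omega
  set σ : Fin K → Finset (Fin m) := fun k =>
    if h : (k : ℕ) < m * N then {⟨(k : ℕ) / N, hdiv k h⟩} else S with hσ
  refine ⟨K, hKpos, σ, ?_, ?_⟩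
  · intro k
    by_cases h : (k : ℕ) < m * N
    · simp only [hσ, dif_pos h, Finset.card_singleton]; exact hs
    · simp only [hσ, dif_neg h]; exact hScard.trans hd
  · -- main inclusion
    set R := LinearMap.range (sysL A B K σ) with hR
    have hVR : ∀ i < c₀,
        Submodule.map (Matrix.mulVecLin (A ^ i)) (span ℝ (bcol B '' ↑S)) ≤ R := by
      intro i hi
      have hkK : K - 1 - i < K := by omega
      set k : Fin K := ⟨K - 1 - i, hkK⟩ with hk
      have hexp : K - 1 - (k : ℕ) = i := by simp only [hk]; omega
      have hσk : σ k = S := by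
        rw [hσ]
        beta_reduce
        rw [dif_neg]
        simp only [hk]
        omega
      have := slot_span_le_range A B K σ k
      rwa [hexp, hσk] at this
    have hblock : Submodule.map (Matrix.mulVecLin (A ^ c₀)) (Kry A B) ≤ R := by
      rw [← hc₀ K (by omega)]
      rw [Kry, Submodule.map_iSup]
      refine iSup_le fun j => ?_
      set base := c₀ + (m - 1 - (j : ℕ)) * N with hbase
      have hKbase : A ^ K = A ^ base * A ^ (K - base) := by
        rw [← pow_add]; congr 1
        have := j.isLt
        simp only [hbase, hK]
        -- base ≤ K
        have h1 : (m - 1 - (j : ℕ)) * N ≤ m * N := Nat.mul_le_mul_right N (by omega)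
        omega
      have h2 : Submodule.map (Matrix.mulVecLin (A ^ K)) (colK A B j) ≤
          Submodule.map (Matrix.mulVecLin (A ^ base)) (colK A B j) := by
        rw [hKbase, Matrix.mulVecLin_mul, Submodule.map_comp]
        exact Submodule.map_mono (map_pow_colK_le A B _ j)
      refine le_trans h2 ?_
      rw [colK, Submodule.map_span, span_le]
      rintro x ⟨y, ⟨i, rfl⟩, rfl⟩
      have hkK : (j : ℕ) * N + (N - 1 - (i : ℕ)) < K := by
        have := j.isLt
        have := i.isLt
        have h1 : ((j : ℕ) + 1) * N ≤ m * N := Nat.mul_le_mul_right N (by omega)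
        have h3 : ((j : ℕ) + 1) * N = (j : ℕ) * N + N := by ring
        simp only [hK]
        omega
      set k : Fin K := ⟨(j : ℕ) * N + (N - 1 - (i : ℕ)), hkK⟩ with hk
      have hexp : K - 1 - (k : ℕ) = base + (i : ℕ) := by
        have hj := j.isLt
        have hi := i.isLt
        simp only [hk, hbase, hK]
        have h2 : (m - 1 - (j : ℕ)) * N + ((j : ℕ) + 1) * N = m * N := by
          rw [← Nat.add_mul]; congr 1; omega
        have h3 : ((j : ℕ) + 1) * N = (j : ℕ) * N + N := by ring
        omega
      have hjk : j ∈ σ k := by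
        have hlt : (k : ℕ) < m * N := by
          simp only [hk]
          have := i.isLt
          have h1 : ((j : ℕ) + 1) * N ≤ m * N := Nat.mul_le_mul_right N (by omega)
          have h3 : ((j : ℕ) + 1) * N = (j : ℕ) * N + N := by ring
          omega
        rw [hσ]
        beta_reduce
        rw [dif_pos hlt, Finset.mem_singleton]
        apply Fin.ext
        show (j : ℕ) = ((k : ℕ) / N)
        have hdv : ((j : ℕ) * N + (N - 1 - (i : ℕ))) / N = (j : ℕ) := by
          refine Nat.div_eq_of_lt_le (Nat.le_add_right _ _) ?_
          have h3 : ((j : ℕ) + 1) * N = (j : ℕ) * N + N := by ring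
          have := i.isLt
          omega
        simp only [hk]
        rw [hdv]
      have := slot_mem_range A B K σ k hjk
      rw [hexp] at this
      show (Matrix.mulVecLin (A ^ base)) ((A ^ (i : ℕ)) *ᵥ bcol B j) ∈ R
      rwa [mulVecLin_apply, Matrix.mulVec_mulVec, ← pow_add]
    refine le_trans (unroll A B S hSle c₀) (sup_le hblock ?_)
    exact Finset.sup_le fun i hi => hVR i (Finset.mem_range.1 hi)


end More

section Final
variable {N m : ℕ} (A : Matrix (Fin N) (Fin N) ℝ) (B : Matrix (Fin N) (Fin m) ℝ)

lemma exists_sigma_easy (hN : 0 < N) :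
    ∃ K : ℕ, 0 < K ∧ ∃ σ : Fin K → Finset (Fin m), (∀ k, (σ k).card ≤ m) ∧
      Kry A B ≤ LinearMap.range (sysL A B K σ) := by
  refine ⟨N, hN, fun _ => Finset.univ, fun k => le_of_eq (by simp), ?_⟩
  refine iSup_le fun j => ?_
  rw [colK, span_le]
  rintro x ⟨i, rfl⟩
  have hkK : N - 1 - (i : ℕ) < N := by have := i.isLt; omega
  have hexp : N - 1 - ((⟨N - 1 - (i : ℕ), hkK⟩ : Fin N) : ℕ) = (i : ℕ) := by
    have := i.isLt; simp only []; omega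
  have := slot_mem_range A B N (fun _ => Finset.univ) ⟨N - 1 - (i : ℕ), hkK⟩
    (Finset.mem_univ j)
  rwa [hexp] at this

lemma exists_sigma (s : ℕ) (hN : 0 < N) (hm : 0 < m) (hs : 0 < s)
    (hbound : min m (N - A.rank) ≤ s) :
    ∃ K : ℕ, 0 < K ∧ ∃ σ : Fin K → Finset (Fin m), (∀ k, (σ k).card ≤ s) ∧
      Kry A B ≤ LinearMap.range (sysL A B K σ) := by
  by_cases hms : m ≤ s
  · obtain ⟨K, hK, σ, hcard, hle⟩ := exists_sigma_easy A B hN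
    exact ⟨K, hK, σ, fun k => (hcard k).trans hms, hle⟩
  · refine exists_sigma_hard A B s hN hm hs ?_
    rw [min_def] at hbound
    split_ifs at hbound with h
    · omega
    · exact hbound

end Final

end OutputSparseAux

open OutputSparseAux in
/-- If `rank(C·W) = n` and `s ≥ min{m, N − rank(A)}`, then the system is output
`s`-sparse controllable (in particular, for invertible `A`, output controllability
implies output `s`-sparse controllability for every `s ≥ 1`). -/
theorem output_sparse_controllable_of_rank_bound {N m n : ℕ}
    (A : Matrix (Fin N) (Fin N) ℝ) (B : Matrix (Fin N) (Fin m) ℝ)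
    (C : Matrix (Fin n) (Fin N) ℝ) (s : ℕ) (hs : 0 < s)
    (hrank : (C * ctrbMat A B).rank = n)
    (hbound : min m (N - A.rank) ≤ s) :
    OutputSparseControllable A B C s := by
  classical
  intro x0 yf
  by_cases h0 : N = 0 ∨ m = 0
  · -- degenerate: the rank hypothesis forces `n = 0`
    have hn : n = 0 := by
      have h1 := (C * ctrbMat A B).rank_le_card_width
      rw [hrank] at h1
      simp only [Fintype.card_prod, Fintype.card_fin] at h1
      rcases h0 with h | h <;> subst h <;> omega
    refine ⟨1, one_pos, fun _ => 0, fun k => by simp, ?_⟩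
    subst hn
    exact Subsingleton.elim _ _
  push_neg at h0
  obtain ⟨hN, hm⟩ : 0 < N ∧ 0 < m := ⟨Nat.pos_of_ne_zero h0.1, Nat.pos_of_ne_zero h0.2⟩
  obtain ⟨K, hK, σ, hcard, hle⟩ := exists_sigma A B s hN hm hs hbound
  -- C maps the Krylov space onto everything
  have hCK : Submodule.map C.mulVecLin (Kry A B) = ⊤ := by
    have hWK : LinearMap.range (ctrbMat A B).mulVecLin ≤ Kry A B := by
      rw [Matrix.range_mulVecLin, span_le]
      rintro x ⟨p, rfl⟩
      have hcol : (ctrbMat A B)ᵀ p = (A ^ (N - 1 - (p.1 : ℕ))) *ᵥ bcol B p.2 := by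
        funext i
        simp [ctrbMat, Matrix.transpose_apply, Matrix.mul_apply, Matrix.mulVec, dotProduct,
          bcol]
      rw [show (ctrbMat A B).col p = (ctrbMat A B)ᵀ p from rfl, hcol]
      exact le_iSup (colK A B) p.2 (mem_colK A B _ p.2)
    have h2 : LinearMap.range ((C * ctrbMat A B).mulVecLin) = ⊤ := by
      apply Submodule.eq_top_of_finrank_eq
      have : Module.finrank ℝ (LinearMap.range ((C * ctrbMat A B).mulVecLin))
          = (C * ctrbMat A B).rank := rfl
      rw [this, hrank, Module.finrank_pi, Fintype.card_fin]
    refine le_antisymm le_top ?_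
    rw [← h2, Matrix.mulVecLin_mul, LinearMap.range_comp]
    exact Submodule.map_mono hWK
  -- get the input
  have htop : Submodule.map C.mulVecLin (LinearMap.range (sysL A B K σ)) = ⊤ :=
    le_antisymm le_top (by rw [← hCK]; exact Submodule.map_mono hle)
  have hmem : yf - C *ᵥ ((A ^ K) *ᵥ x0) ∈
      Submodule.map C.mulVecLin (LinearMap.range (sysL A B K σ)) := by
    rw [htop]; trivial
  obtain ⟨d, ⟨w, hw⟩, hd⟩ := hmem
  rw [Matrix.mulVecLin_apply] at hd
  refine ⟨K, hK, fun k => maskL (σ k) (w k), ?_, ?_⟩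
  · intro k
    refine le_trans (Set.ncard_le_ncard (support_maskL (σ k) (w k)) (Finset.finite_toSet _)) ?_
    rw [Set.ncard_coe_finset]
    exact hcard k
  · have hsum : (∑ k : Fin K, (A ^ (K - 1 - (k : ℕ))) *ᵥ (B *ᵥ maskL (σ k) (w k))) = d := by
      rw [← hw, sysL_apply]
    rw [hsum, Matrix.mulVec_add, hd]
    simp
end

section
/- For the controllability matrix W of (A, B) and its Kalman decomposition via an orthogonal matrix Q = [Q̃, R] with W = Q̃ W̃ (W̃ full row rank r = rank W), one has rank(C·A^i·W) = rank(C·Q̃·Ã^i) for every i ≥ 0, where Ã is the r×r upper-left block of Qᵀ A Q. -/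
open Matrix

lemma rank_mul_full_row_rank {n r : ℕ} {k : Type*} [Fintype k] (X : Matrix (Fin n) (Fin r) ℝ)
    (Wt : Matrix (Fin r) k ℝ) (hWt : Wt.rank = r) :
    (X * Wt).rank = X.rank := by
  have hsurj : LinearMap.range Wt.mulVecLin = ⊤ := by
    apply Submodule.eq_top_of_finrank_eq
    rw [← Matrix.rank, hWt, Module.finrank_fin_fun]
  unfold Matrix.rank
  rw [Matrix.mulVecLin_mul, LinearMap.range_comp_of_range_eq_top _ hsurj]

set_option maxHeartbeats 1000000 in
/-- Via the Kalman decomposition `W = Q̃ W̃` (with `Q = [Q̃, R]` orthogonal, `W̃` of full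
row rank `r = rank W`, and `Qᵀ A Q` block upper triangular with upper-left block `Ã`),
one has `rank(C·A^i·W) = rank(C·Q̃·Ã^i)` for every `i ≥ 0`. -/
theorem rank_CAiW_eq_rank_CQtAti {N m n r : ℕ}
    (A : Matrix (Fin N) (Fin N) ℝ) (B : Matrix (Fin N) (Fin m) ℝ)
    (C : Matrix (Fin n) (Fin N) ℝ)
    (hrN : r ≤ N) (hr : (ctrbMat A B).rank = r)
    (Q : Matrix (Fin N) (Fin N) ℝ) (hQ : Qᵀ * Q = 1)
    (Wt : Matrix (Fin r) (Fin N × Fin m) ℝ) (hWt : Wt.rank = r)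
    (hW : ctrbMat A B = (Q.submatrix id (Fin.castLE hrN)) * Wt)
    (htri : ∀ i j : Fin N, r ≤ (i : ℕ) → (j : ℕ) < r → (Qᵀ * A * Q) i j = 0) :
    ∀ i : ℕ,
      (C * A ^ i * ctrbMat A B).rank
        = (C * (Q.submatrix id (Fin.castLE hrN))
            * ((Qᵀ * A * Q).submatrix (Fin.castLE hrN) (Fin.castLE hrN)) ^ i).rank := by
  set Qt := Q.submatrix id (Fin.castLE hrN) with hQt
  set M := Qᵀ * A * Q with hM
  set At := M.submatrix (Fin.castLE hrN) (Fin.castLE hrN) with hAt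
  have hQQ : Q * Qᵀ = 1 := mul_eq_one_comm.mp hQ
  have hAQfull : A * Q = Q * M := by
    rw [hM, ← Matrix.mul_assoc, ← Matrix.mul_assoc, hQQ, Matrix.one_mul]
  have hAQ : A * Qt = Qt * At := by
    ext i j
    have h1 : (A * Qt) i j = (A * Q) i (Fin.castLE hrN j) := by
      simp [hQt, Matrix.mul_apply]
    rw [h1, hAQfull]
    have h2 : (Q * M) i (Fin.castLE hrN j)
        = ∑ k : Fin N, Q i k * M k (Fin.castLE hrN j) := by
      simp [Matrix.mul_apply]
    have h3 : (Qt * At) i j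
        = ∑ k : Fin r, Q i (Fin.castLE hrN k) * M (Fin.castLE hrN k) (Fin.castLE hrN j) := by
      simp [hQt, hAt, Matrix.mul_apply]
    rw [h2, h3]
    have h4 : ∑ k : Fin r, Q i (Fin.castLE hrN k) * M (Fin.castLE hrN k) (Fin.castLE hrN j)
        = ∑ k ∈ Finset.univ.map (Fin.castLEEmb hrN), Q i k * M k (Fin.castLE hrN j) := by
      rw [Finset.sum_map]
      rfl
    rw [h4]
    symm
    apply Finset.sum_subset (Finset.subset_univ _)
    intro k _ hk
    have hkr : r ≤ (k : ℕ) := by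
      by_contra h
      push_neg at h
      exact hk (Finset.mem_map.mpr ⟨⟨k, h⟩, Finset.mem_univ _, rfl⟩)
    rw [htri k (Fin.castLE hrN j) hkr (by simp), mul_zero]
  have hpow : ∀ i : ℕ, A ^ i * Qt = Qt * At ^ i := by
    intro i
    induction i with
    | zero => simp
    | succ i ih =>
      rw [pow_succ, pow_succ, Matrix.mul_assoc, hAQ, ← Matrix.mul_assoc, ih,
        Matrix.mul_assoc]
  intro i
  have : C * A ^ i * ctrbMat A B = (C * Qt * At ^ i) * Wt := by
    rw [hW, ← Matrix.mul_assoc, Matrix.mul_assoc C (A ^ i) Qt, hpow,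
      ← Matrix.mul_assoc, Matrix.mul_assoc, Matrix.mul_assoc, ← Matrix.mul_assoc C Qt]
  rw [this]
  exact rank_mul_full_row_rank (C * Qt * At ^ i) Wt hWt
end
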